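/- arXiv:1412.7669 — 6 statements merged into one kernel-verified Lean document; each statement's English description precedes it below -/
import Mathlib

section
/- Let X be a finite group and let G be a finite group having a normal subgroup K with G/K ≅ X, such that no proper subgroup of G involves X. Then K is nilpotent and every prime divisor of |K| divides |X|. -/
/-- A group `X` is involved in a group `G` if there are subgroups `N ⊴ K ≤ G`
with `K / N ≅ X`; equivalently, some subgroup of `G` surjects onto `X`. -/
def Involved (X G : Type*) [Group X] [Group G] : Prop :=
  ∃ (K : Subgroup G) (φ : K →* X), Function.Surjective φ

section Aux

open scoped Pointwise

variable {X G : Type} [Group X] [Group G]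

lemma involved_of_sup_eq_top (K : Subgroup G) [K.Normal] (e : (G ⧸ K) ≃* X)
    (H : Subgroup G) (hsup : H ⊔ K = ⊤) : Involved X ↥H := by
  have hsurj : Function.Surjective ((QuotientGroup.mk' K).comp H.subtype) := by
    intro x
    obtain ⟨g, rfl⟩ := QuotientGroup.mk'_surjective K x
    have hg : g ∈ (H : Set G) * (K : Set G) := by
      rw [← Subgroup.mul_normal, hsup]; exact Set.mem_univ g
    obtain ⟨h, hh, k, hk, rfl⟩ := hg
    refine ⟨⟨h, hh⟩, ?_⟩
    have : (QuotientGroup.mk' K) k = 1 := (QuotientGroup.eq_one_iff k).mpr hk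
    simp [this]
    exact hk
  refine ⟨⊤, (e.toMonoidHom.comp ((QuotientGroup.mk' K).comp H.subtype)).comp
      (⊤ : Subgroup ↥H).subtype, fun y => ?_⟩
  obtain ⟨x, hx⟩ := (e.surjective.comp hsurj) y
  exact ⟨⟨x, trivial⟩, hx⟩

lemma sylow_map_normal [Finite G] (K : Subgroup G) [K.Normal] (e : (G ⧸ K) ≃* X)
    (hmin : ∀ H : Subgroup G, H ≠ ⊤ → ¬ Involved X ↥H)
    {p : ℕ} [Fact p.Prime] (P : Sylow p ↥K) :
    (Subgroup.map K.subtype (↑P : Subgroup ↥K)).Normal := by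
  rw [← Subgroup.normalizer_eq_top_iff]
  by_contra hne
  exact hmin _ hne (involved_of_sup_eq_top K e _ (Sylow.normalizer_sup_eq_top P))

end Aux

/-- Let `X` be a finite group and let `G` be a finite group having a normal subgroup
`K` with `G / K ≅ X`, such that no proper subgroup of `G` involves `X`. Then `K` is
nilpotent and every prime divisor of `|K|` divides `|X|`. -/
theorem stmt4 (X G : Type) [Group X] [Finite X] [Group G] [Finite G]
    (K : Subgroup G) [K.Normal] (hiso : Nonempty ((G ⧸ K) ≃* X))
    (hmin : ∀ H : Subgroup G, H ≠ ⊤ → ¬ Involved X ↥H) :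
    Group.IsNilpotent ↥K ∧ ∀ q : ℕ, q.Prime → q ∣ Nat.card ↥K → q ∣ Nat.card X := by
  obtain ⟨e⟩ := hiso
  constructor
  · refine ((isNilpotent_of_finite_tfae (G := ↥K)).out 3 0).mp ?_
    intro p hp P
    have h1 := (sylow_map_normal K e hmin P).comap K.subtype
    rwa [Subgroup.comap_map_eq_self_of_injective K.subtype_injective] at h1
  · intro q hq hdvd
    haveI : Fact q.Prime := ⟨hq⟩
    by_contra hnd
    obtain ⟨Q⟩ : Nonempty (Sylow q ↥K) := inferInstance
    set Q' := Subgroup.map K.subtype (↑Q : Subgroup ↥K) with hQ'def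
    haveI := sylow_map_normal K e hmin Q
    have hcardX : Nat.card X = K.index := by
      rw [← Nat.card_congr e.toEquiv]; rfl
    have hle : Q' ≤ K := Subgroup.map_subtype_le _
    have hrel : Q'.relIndex K = (↑Q : Subgroup ↥K).index := by
      unfold Q'
      rw [Subgroup.relIndex, Subgroup.subgroupOf,
        Subgroup.comap_map_eq_self_of_injective K.subtype_injective]
    have hindex : ¬ q ∣ Q'.index := by
      rw [← Subgroup.relIndex_mul_index hle, hrel]
      exact hq.not_dvd_mul Q.not_dvd_index (hcardX ▸ hnd)
    have hcardQ : q ∣ Nat.card Q' := by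
      have h1 : q ∣ Nat.card (↑Q : Subgroup ↥K) := Q.dvd_card_of_dvd_card hdvd
      rwa [hQ'def, Nat.card_congr
        (Subgroup.equivMapOfInjective _ _ K.subtype_injective).toEquiv.symm]
    have hcop : Nat.Coprime (Nat.card Q') Q'.index := by
      obtain ⟨n, hn⟩ := IsPGroup.iff_card.mp (Q.isPGroup'.map K.subtype)
      rw [hn]
      exact Nat.Coprime.pow_left _ (hq.coprime_iff_not_dvd.mpr hindex)
    obtain ⟨H, hH⟩ := Subgroup.exists_right_complement'_of_coprime hcop
    have hHne : H ≠ ⊤ := by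
      intro htop
      have hbot : Q' = ⊥ := by simpa [htop] using hH.disjoint
      rw [hbot] at hcardQ
      simp at hcardQ
      exact hq.one_lt.ne' hcardQ
    refine hmin H hHne (involved_of_sup_eq_top K e H ?_)
    rw [eq_top_iff, ← hH.sup_eq_top, sup_comm]
    exact sup_le_sup_left hle H
end

section
/- Let d = r^f be a power of a prime r and let L be a 2-transitive subgroup of AΓL(1,d) acting on the field 𝔽_d of order d. Then L contains the translation subgroup V_d = { x ↦ x + u : u ∈ 𝔽_d }; consequently, with X = L ∩ AGL(1,d) and X_0 the stabiliser of 0 in X, one has X = V_d ⋊ X_0. -/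
theorem Equiv.Perm.apply_inv_self {α : Type*} (f : Equiv.Perm α) (x : α) : f (f⁻¹ x) = x :=
  f.apply_symm_apply x

/-- Let `d = r ^ f` be a prime power and let `L` be a `2`-transitive subgroup of
`AΓL(1,d)` acting on the field `F` of order `d`. Then `L` contains the translation
subgroup `V_d`; consequently, with `X = L ⊓ AGL(1,d)` and `X₀` the stabiliser of `0`
in `X`, one has `X = V_d ⋊ X₀` (internally: `V_d ≤ X`, `V_d` is normal in `X`,
`V_d ⊓ X₀ = ⊥` and `V_d ⊔ X₀ = X`). -/
theorem stmt7 (r f : ℕ) (hr : r.Prime) (hf : 0 < f)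
    (F : Type) [Field F] (hcard : Nat.card F = r ^ f)
    (AGammaL AGL Vd : Subgroup (Equiv.Perm F))
    (hAGammaL : ∀ π : Equiv.Perm F, π ∈ AGammaL ↔
      ∃ (α : Fˣ) (σ : F ≃+* F) (u : F), ∀ x : F, π x = ↑α * σ x + u)
    (hAGL : ∀ π : Equiv.Perm F, π ∈ AGL ↔
      ∃ (α : Fˣ) (u : F), ∀ x : F, π x = ↑α * x + u)
    (hVd : ∀ π : Equiv.Perm F, π ∈ Vd ↔ ∃ u : F, ∀ x : F, π x = x + u)
    (L : Subgroup (Equiv.Perm F)) (hLsub : L ≤ AGammaL)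
    (hLtrans : ∀ x y : F, ∃ g ∈ L, g x = y)
    (hL2trans : ∀ x y : F, x ≠ 0 → y ≠ 0 → ∃ g ∈ L, g 0 = 0 ∧ g x = y) :
    Vd ≤ L ∧
      Vd ≤ L ⊓ AGL ∧
      (∀ g ∈ L ⊓ AGL, ∀ t ∈ Vd, g * t * g⁻¹ ∈ Vd) ∧
      Vd ⊓ ((L ⊓ AGL) ⊓ MulAction.stabilizer (Equiv.Perm F) (0 : F)) = ⊥ ∧
      Vd ⊔ ((L ⊓ AGL) ⊓ MulAction.stabilizer (Equiv.Perm F) (0 : F)) = L ⊓ AGL := by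
  classical
  have hFcard : 2 ≤ Nat.card F := by
    rw [hcard]
    calc 2 ≤ r := hr.two_le
      _ ≤ r ^ f := Nat.le_self_pow hf.ne' r
  have hFin : Finite F := Nat.finite_of_card_ne_zero (by omega)
  have hAutFin : Finite (F ≃+* F) :=
    Finite.of_injective (fun σ : F ≃+* F => (σ : F ≃ F))
      (fun a b h => by ext x; exact congrArg (fun e : F ≃ F => e x) h)
  -- count of field automorphisms
  have hAutCard : Nat.card (F ≃+* F) ≤ Nat.card Fˣ := by
    obtain ⟨ζ, hζ⟩ := IsCyclic.exists_generator (α := Fˣ)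
    refine Nat.card_le_card_of_injective
      (fun σ : F ≃+* F => Units.mk0 (σ (ζ : F)) (by simp [ζ.ne_zero])) ?_
    intro σ τ h
    have hval : σ (ζ : F) = τ (ζ : F) := congrArg Units.val h
    ext x
    rcases eq_or_ne x 0 with rfl | hx
    · simp
    · obtain ⟨n, hn⟩ := Subgroup.mem_zpowers_iff.mp (hζ (Units.mk0 x hx))
      have hxn : ((ζ : F)) ^ n = x := by
        have := congrArg Units.val hn
        simpa using this
      rw [← hxn, map_zpow₀, map_zpow₀, hval]
  -- Step 1: L contains a nontrivial translation
  have hstep : ∃ v : F, v ≠ 0 ∧ ∃ tv ∈ L, ∀ x, tv x = x + v := by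
    by_contra hcon
    push_neg at hcon
    have hT : ∀ g ∈ L, ∀ u : F, (∀ x, g x = x + u) → u = 0 := by
      intro g hg u hgu
      by_contra hu
      obtain ⟨x, hx⟩ := hcon u hu g hg
      exact hx (hgu x)
    -- injection L → Fˣ × Aut F
    have key : ∀ g : L, ∃ p : Fˣ × (F ≃+* F),
        ∀ x, (g : Equiv.Perm F) x = ↑p.1 * p.2 x + (g : Equiv.Perm F) 0 := by
      rintro ⟨g, hg⟩
      obtain ⟨α, σ, u, h⟩ := (hAGammaL g).1 (hLsub hg)
      have h0 : g 0 = u := by simpa using h 0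
      exact ⟨(α, σ), fun x => by simp only [h x, h0]⟩
    choose Φ hΦ using key
    have hΦinj : Function.Injective Φ := by
      intro g h hgh
      have he : ∀ x, (↑h * (↑g)⁻¹ : Equiv.Perm F) x
          = x + ((h : Equiv.Perm F) 0 - (g : Equiv.Perm F) 0) := by
        intro x
        have hg' := hΦ g ((g : Equiv.Perm F)⁻¹ x)
        have hh' := hΦ h ((g : Equiv.Perm F)⁻¹ x)
        rw [hgh] at hg'
        rw [Equiv.Perm.apply_inv_self] at hg'
        simp only [Equiv.Perm.mul_apply]
        rw [hh']
        linear_combination -hg'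
      have hd0 : (h : Equiv.Perm F) 0 - (g : Equiv.Perm F) 0 = 0 :=
        hT _ (mul_mem h.2 (inv_mem g.2)) _ he
      have : (↑h * (↑g)⁻¹ : Equiv.Perm F) = 1 :=
        Equiv.ext fun x => by simpa [hd0] using he x
      exact (Subtype.ext (mul_inv_eq_one.mp this)).symm
    have c1 : Nat.card L ≤ Nat.card (Fˣ × (F ≃+* F)) :=
      Nat.card_le_card_of_injective Φ hΦinj
    -- surjection L → F × Fˣ
    set Ψ : L → F × Fˣ := fun g =>
      ((g : Equiv.Perm F) 0,
        Units.mk0 ((g : Equiv.Perm F) 1 - (g : Equiv.Perm F) 0)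
          (sub_ne_zero.2 ((g : Equiv.Perm F).injective.ne one_ne_zero))) with hΨdef
    have hΨsurj : Function.Surjective Ψ := by
      rintro ⟨a, β⟩
      obtain ⟨k, hkL, hk0⟩ := hLtrans 0 a
      have hb : k⁻¹ (a + ↑β) ≠ 0 := by
        intro h0
        have : a + ↑β = k 0 := by
          rw [← Equiv.Perm.apply_inv_self k (a + ↑β), h0]
        rw [hk0] at this
        exact β.ne_zero (add_eq_left.mp this)
      obtain ⟨h, hhL, hh0, hh1⟩ := hL2trans 1 (k⁻¹ (a + ↑β)) one_ne_zero hb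
      refine ⟨⟨k * h, mul_mem hkL hhL⟩, ?_⟩
      have e0 : (k * h) 0 = a := by
        simp only [Equiv.Perm.mul_apply, hh0, hk0]
      have e1 : (k * h) 1 = a + ↑β := by
        simp only [Equiv.Perm.mul_apply, hh1, Equiv.Perm.apply_inv_self]
      simp only [hΨdef]
      refine Prod.ext ?_ (Units.ext ?_)
      · exact e0
      · simp only [Units.val_mk0, e0, e1]
        ring
    have c2 : Nat.card (F × Fˣ) ≤ Nat.card L :=
      Nat.card_le_card_of_surjective Ψ hΨsurj
    have e1 : Nat.card (F × Fˣ) = Nat.card F * (Nat.card F - 1) := by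
      rw [Nat.card_prod, Nat.card_units]
    have e2 : Nat.card (Fˣ × (F ≃+* F)) ≤ (Nat.card F - 1) * (Nat.card F - 1) := by
      rw [Nat.card_prod, Nat.card_units]
      exact Nat.mul_le_mul_left _ (hAutCard.trans_eq (Nat.card_units (α := F)))
    have hineq : Nat.card F * (Nat.card F - 1) ≤ (Nat.card F - 1) * (Nat.card F - 1) := by
      calc Nat.card F * (Nat.card F - 1) = Nat.card (F × Fˣ) := e1.symm
        _ ≤ Nat.card L := c2
        _ ≤ Nat.card (Fˣ × (F ≃+* F)) := c1
        _ ≤ (Nat.card F - 1) * (Nat.card F - 1) := e2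
    have : Nat.card F ≤ Nat.card F - 1 :=
      Nat.le_of_mul_le_mul_right hineq (by omega)
    omega
  obtain ⟨v, hv, tv, htvL, htv⟩ := hstep
  -- main claim : Vd ≤ L
  have hVL : Vd ≤ L := by
    intro π hπ
    obtain ⟨u, hu⟩ := (hVd π).1 hπ
    rcases eq_or_ne u 0 with rfl | hu0
    · have : π = 1 := Equiv.ext fun x => by simp [hu x]
      rw [this]; exact one_mem L
    · obtain ⟨g, hgL, hg0, hgv⟩ := hL2trans v u hv hu0
      obtain ⟨α, σ, w, hg⟩ := (hAGammaL g).1 (hLsub hgL)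
      have hw : w = 0 := by
        have := hg 0
        rw [hg0] at this
        simpa using this.symm
      have hασv : ↑α * σ v = u := by
        have := hg v
        rw [hgv, hw, add_zero] at this
        exact this.symm
      have hπeq : π = g * tv * g⁻¹ := by
        apply Equiv.ext; intro x
        have h1 : (g * tv * g⁻¹) x = g (g⁻¹ x + v) := by
          simp only [Equiv.Perm.mul_apply, htv]
        have h2 : g (g⁻¹ x + v) = ↑α * σ (g⁻¹ x) + ↑α * σ v + w := by
          rw [hg]; rw [map_add]; ring
        have h3 : ↑α * σ (g⁻¹ x) + w = x := by
          rw [← hg]; exact Equiv.Perm.apply_inv_self g x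
        rw [hu x, h1, h2, hασv]
        linear_combination -h3
      rw [hπeq]
      exact mul_mem (mul_mem hgL htvL) (inv_mem hgL)
  have hVX : Vd ≤ L ⊓ AGL := by
    intro π hπ
    obtain ⟨u, hu⟩ := (hVd π).1 hπ
    exact ⟨hVL hπ, (hAGL π).2 ⟨1, u, fun x => by simp [hu x]⟩⟩
  refine ⟨hVL, hVX, ?_, ?_, ?_⟩
  · -- normality
    intro g hg t ht
    obtain ⟨α, w, hgf⟩ := (hAGL g).1 hg.2
    obtain ⟨u, htf⟩ := (hVd t).1 ht
    refine (hVd _).2 ⟨↑α * u, fun x => ?_⟩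
    have hc : g (g⁻¹ x + u) = ↑α * (g⁻¹ x) + w + ↑α * u := by rw [hgf]; ring
    have h3 : ↑α * (g⁻¹ x) + w = x := by
      rw [← hgf]; exact Equiv.Perm.apply_inv_self g x
    simp only [Equiv.Perm.mul_apply, htf, hc, h3]
  · -- trivial intersection
    rw [eq_bot_iff]
    intro π hπ
    simp only [Subgroup.mem_inf] at hπ
    obtain ⟨hπV, -, hπs⟩ := hπ
    obtain ⟨u, hu⟩ := (hVd π).1 hπV
    have h0 : π 0 = 0 := hπs
    have hu0 : u = 0 := by
      have := hu 0
      rw [h0] at this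
      simpa using this.symm
    have : π = 1 := Equiv.ext fun x => by simp [hu x, hu0]
    simp [this, Subgroup.mem_bot]
  · -- sup
    apply le_antisymm
    · exact sup_le hVX inf_le_left
    · intro g hg
      obtain ⟨α, u, hgf⟩ := (hAGL g).1 hg.2
      set t : Equiv.Perm F := (Equiv.addRight u : F ≃ F) with htdef
      have htV : t ∈ Vd := (hVd t).2 ⟨u, fun x => rfl⟩
      have ht_inv : ∀ x, t⁻¹ x = x - u := by
        intro x
        rw [Equiv.Perm.inv_eq_iff_eq]
        simp [htdef]
      have hg0 : g 0 = u := by simpa using hgf 0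
      have hmem : t⁻¹ * g ∈ (L ⊓ AGL) ⊓ MulAction.stabilizer (Equiv.Perm F) (0 : F) := by
        refine Subgroup.mem_inf.2 ⟨Subgroup.mem_inf.2 ⟨?_, ?_⟩, ?_⟩
        · exact mul_mem (inv_mem (hVL htV)) hg.1
        · refine (hAGL _).2 ⟨α, 0, fun x => ?_⟩
          simp only [Equiv.Perm.mul_apply, ht_inv, hgf]
          ring
        · show (t⁻¹ * g) • (0 : F) = 0
          simp only [Equiv.Perm.smul_def, Equiv.Perm.mul_apply, hg0, ht_inv]
          ring
      have : g = t * (t⁻¹ * g) := by group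
      rw [this]
      exact Subgroup.mul_mem_sup htV hmem
end

section
/- Let d = r^f be a power of a prime r, and suppose it is not the case that r = 2 and 2 ≤ f ≤ 6. Then every element of ΓL(1,d) \ GL(1,d) has order at most (d−1)/f; that is, for every α ∈ 𝔽_d^× and every non-identity σ ∈ Gal(𝔽_{r^f}/𝔽_r), the permutation x ↦ α·σ(x) of 𝔽_d has order at most (r^f − 1)/f. -/
lemma hh1 : ∀ e, 1 ≤ e → 4*e ≤ 3^e + 1 := by
  intro e he
  induction e, he using Nat.le_induction with
  | base => norm_num
  | succ n hn ih =>
    have h3 : 3 ≤ 3^n := by calc 3 = 3^1 := by norm_num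
                                 _ ≤ 3^n := Nat.pow_le_pow_right (by norm_num) hn
    rw [pow_succ]; omega

lemma hh2 : ∀ e, 4 ≤ e → 4*e ≤ 2^e + 1 := by
  intro e he
  induction e, he using Nat.le_induction with
  | base => norm_num
  | succ n hn ih =>
    have h3 : 16 ≤ 2^n := by calc 16 = 2^4 := by norm_num
                                  _ ≤ 2^n := Nat.pow_le_pow_right (by norm_num) hn
    rw [pow_succ]; omega

lemma hh3 : ∀ n, 2 ≤ n → n^2 + 2*n ≤ 3^n := by
  intro n hn
  induction n, hn using Nat.le_induction with
  | base => norm_num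
  | succ n hn ih =>
    have hp : (3:ℕ)^(n+1) = 3^n * 3 := pow_succ 3 n
    nlinarith [ih, hn]

lemma hh4 : ∀ e, 1 ≤ e → ∀ a, 3 ≤ a → e*(a+1) ≤ a^e + 1 := by
  intro e he
  induction e, he using Nat.le_induction with
  | base => intro a ha; simp
  | succ n hn ih =>
    intro a ha
    have h2 : n*(a+1)*a ≤ (a^n + 1)*a := Nat.mul_le_mul_right a (ih a ha)
    have hp : (a:ℕ)^(n+1) = a^n * a := pow_succ a n
    have e1 : n ≤ n*a := Nat.le_mul_of_pos_right n (by omega)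
    have e2 : a ≤ n*a := Nat.le_mul_of_pos_left a (by omega)
    have e3 : n*a*3 ≤ n*a*a := Nat.mul_le_mul_left _ ha
    nlinarith [h2, hn, ha]

lemma hh5 : ∀ n, 6 ≤ n → n^2 + 2*n ≤ 2^n := by
  intro n hn
  induction n, hn using Nat.le_induction with
  | base => norm_num
  | succ n hn ih =>
    have hp : (2:ℕ)^(n+1) = 2^n * 2 := pow_succ 2 n
    nlinarith [ih, hn]

lemma hh6 : ∀ n, 3 ≤ n → 2*(n+1)^2 ≤ 4^n := by
  intro n hn
  induction n, hn using Nat.le_induction with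
  | base => norm_num
  | succ n hn ih =>
    have hp : (4:ℕ)^(n+1) = 4^n * 4 := pow_succ 4 n
    nlinarith [ih, hn]

lemma hh7 : ∀ n, 1 ≤ n → (n+2)^2 ≤ 2*8^n := by
  intro n hn
  induction n, hn using Nat.le_induction with
  | base => norm_num
  | succ n hn ih =>
    have hp : (8:ℕ)^(n+1) = 8^n * 8 := pow_succ 8 n
    nlinarith [ih, hn]

lemma hh8 : ∀ e, 1 ≤ e → 2*e ≤ 2^e := by
  intro e he
  induction e, he using Nat.le_induction with
  | base => norm_num
  | succ n hn ih => rw [pow_succ]; omega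

lemma step2 (r e m : ℕ) (hr : 2 ≤ r) (he : 1 ≤ e) (hm : 2 ≤ m)
    (hx : r = 2 → 7 ≤ e * m) : e * m^2 ≤ r^(e*(m-1)) + 1 := by
  rcases eq_or_lt_of_le hr with hr2 | hr3
  · -- r = 2
    have hem := hx hr2.symm
    rw [← hr2]
    rcases eq_or_lt_of_le hm with hm2 | hm3
    · -- m = 2
      rw [← hm2] at hem ⊢
      have he4 : 4 ≤ e := by omega
      calc e * 2^2 = 4*e := by ring
        _ ≤ 2^e + 1 := hh2 e he4
        _ = 2^(e*(2-1)) + 1 := by norm_num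
    · have hm3 : 3 ≤ m := hm3
      obtain he1 | he2 | he3 : e = 1 ∨ e = 2 ∨ 3 ≤ e := by omega
      · subst he1
        have h7 : 7 ≤ m := by omega
        have h := hh5 (m-1) (by omega)
        have hs : m - 1 + 1 = m := by omega
        have hmm : m^2 ≤ 2^(m-1) + 1 := by nlinarith [h, hs, h7]
        simpa using hmm
      · subst he2
        have h4 : 4 ≤ m := by omega
        have h := hh6 (m-1) (by omega)
        have hs : m - 1 + 1 = m := by omega
        have hmm : 2*m^2 ≤ 4^(m-1) := by
          calc 2*m^2 = 2*((m-1)+1)^2 := by rw [hs]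
            _ ≤ 4^(m-1) := h
        calc 2 * m^2 ≤ 4^(m-1) := hmm
          _ = 2^(2*(m-1)) := by rw [pow_mul]; norm_num
          _ ≤ 2^(2*(m-1)) + 1 := Nat.le_succ _
      · -- e ≥ 3
        have k1 : m^2 ≤ 2*8^(m-2) := by
          have h := hh7 (m-2) (by omega)
          have hs : m - 2 + 2 = m := by omega
          calc m^2 = ((m-2)+2)^2 := by rw [hs]
            _ ≤ 2*8^(m-2) := h
        have k2 : 2*e ≤ 2^e := hh8 e he
        have k3 : (8:ℕ)^(m-2) ≤ 2^(e*(m-2)) := by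
          calc (8:ℕ)^(m-2) = 2^(3*(m-2)) := by rw [pow_mul]; norm_num
            _ ≤ 2^(e*(m-2)) := Nat.pow_le_pow_right (by norm_num) (Nat.mul_le_mul_right _ he3)
        calc e * m^2 ≤ e * (2*8^(m-2)) := Nat.mul_le_mul_left _ k1
          _ = (2*e) * 8^(m-2) := by ring
          _ ≤ 2^e * 2^(e*(m-2)) := Nat.mul_le_mul k2 k3
          _ = 2^(e + e*(m-2)) := by rw [pow_add]
          _ = 2^(e*(m-1)) := by
              congr 1
              have h2 : m - 1 = (m-2)+1 := by omega
              rw [h2]; ring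
          _ ≤ 2^(e*(m-1)) + 1 := Nat.le_succ _
  · -- r ≥ 3
    have hr3 : 3 ≤ r := hr3
    rcases eq_or_lt_of_le hm with hm2 | hm3
    · rw [← hm2]
      calc e * 2^2 = 4*e := by ring
        _ ≤ 3^e + 1 := hh1 e he
        _ ≤ r^e + 1 := by
            have := Nat.pow_le_pow_left hr3 e
            omega
        _ = r^(e*(2-1)) + 1 := by norm_num
    · have hm3 : 3 ≤ m := hm3
      have h3 : m^2 ≤ 3^(m-1) + 1 := by
        have h := hh3 (m-1) (by omega)
        have hs : m - 1 + 1 = m := by omega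
        nlinarith [h, hs, hm3]
      have ha3 : 3 ≤ 3^(m-1) := by
        calc (3:ℕ) = 3^1 := by norm_num
          _ ≤ 3^(m-1) := Nat.pow_le_pow_right (by norm_num) (by omega)
      calc e * m^2 ≤ e * (3^(m-1) + 1) := Nat.mul_le_mul_left _ h3
        _ ≤ (3^(m-1))^e + 1 := hh4 e he _ ha3
        _ = 3^((m-1)*e) + 1 := by rw [← pow_mul]
        _ ≤ r^((m-1)*e) + 1 := by
            have := Nat.pow_le_pow_left hr3 ((m-1)*e)
            omega
        _ = r^(e*(m-1)) + 1 := by rw [Nat.mul_comm]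

lemma key (r e m : ℕ) (hr : 2 ≤ r) (he : 1 ≤ e) (hm : 2 ≤ m)
    (hx : r = 2 → 7 ≤ e * m) :
    (e * m) * (m * (r^e - 1)) ≤ r^(e*m) - 1 := by
  have h2 := step2 r e m hr he hm hx
  have hA : 1 ≤ r^e := Nat.one_le_pow _ _ (by omega)
  have hB : r^e ≤ r^(e*(m-1)) :=
    Nat.pow_le_pow_right (by omega) (Nat.le_mul_of_pos_right e (by omega))
  have hC : r^e * r^(e*(m-1)) = r^(e*m) := by
    rw [← pow_add]; congr 1
    cases m with
    | zero => omega
    | succ m => simp [Nat.mul_succ, Nat.add_comm]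
  have hC1 : 1 ≤ r^(e*m) := Nat.one_le_pow _ _ (by omega)
  zify [hA, hC1]
  have hz : ((e:ℤ) * m) * (m * ((r:ℤ)^e - 1)) = (e * m^2) * ((r:ℤ)^e - 1) := by ring
  rw [hz]
  have h2z : ((e:ℤ) * m^2) ≤ (r:ℤ)^(e*(m-1)) + 1 := by exact_mod_cast h2
  have hBz : ((r:ℤ))^e ≤ (r:ℤ)^(e*(m-1)) := by exact_mod_cast hB
  have hAz : (1:ℤ) ≤ (r:ℤ)^e := by exact_mod_cast hA
  have hCz : (r:ℤ)^e * (r:ℤ)^(e*(m-1)) = (r:ℤ)^(e*m) := by exact_mod_cast hC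
  nlinarith [mul_le_mul_of_nonneg_right h2z (by linarith : (0:ℤ) ≤ (r:ℤ)^e - 1), hBz, hCz]

/-- Let `d = r ^ f` be a prime power with not (`r = 2` and `2 ≤ f ≤ 6`), and let `F`
be the field of order `d`. For every `α ∈ Fˣ` and every non-identity field
automorphism `σ` of `F` (i.e. every element of `ΓL(1,d) \ GL(1,d)`), the permutation
`x ↦ α * σ x` of `F` has order at most `(r ^ f - 1) / f`. -/
theorem stmt9 (r f : ℕ) (hr : r.Prime) (hf : 0 < f)
    (hnot : ¬ (r = 2 ∧ 2 ≤ f ∧ f ≤ 6))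
    (F : Type) [Field F] (hcard : Nat.card F = r ^ f)
    (α : Fˣ) (σ : F ≃+* F) (hσ : σ ≠ RingEquiv.refl F)
    (π : Equiv.Perm F) (hπ : ∀ x : F, π x = ↑α * σ x) :
    (orderOf π : ℝ) ≤ ((r : ℝ) ^ f - 1) / f := by
  classical
  have hr2 : 2 ≤ r := hr.two_le
  have hcard1 : 1 ≤ r ^ f := Nat.one_le_pow _ _ (by omega)
  have hFin : Finite F := Nat.finite_of_card_ne_zero (by omega)
  cases nonempty_fintype F
  haveI : Finite (F ≃+* F) := Finite.of_injective (fun e => (e : F ≃ F))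
    (fun a b h => by ext x; exact congrArg (fun g => g.toFun x) h)
  set m := orderOf σ with hm_def
  have hm0 : 0 < m := orderOf_pos σ
  have hm1 : m ≠ 1 := by rw [hm_def, Ne, orderOf_eq_one_iff]; exact hσ
  have hσm : σ ^ m = 1 := pow_orderOf_eq_one σ
  have hα0 : (α : F) ≠ 0 := α.ne_zero
  have hform : ∀ k, ∀ x : F,
      (π ^ k) x = (∏ j ∈ Finset.range k, (σ ^ j) (α:F)) * (σ ^ k) x := by
    intro k
    induction k with
    | zero =>
      intro x
      simp only [pow_zero, Finset.range_zero, Finset.prod_empty, one_mul]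
      rfl
    | succ n ih =>
      intro x
      have h1 : (π ^ (n+1)) x = (π ^ n) (π x) := by rw [pow_succ]; rfl
      have h2 : (σ ^ n) (σ x) = (σ ^ (n+1)) x := by rw [pow_succ]; rfl
      rw [h1, hπ x, ih, Finset.prod_range_succ, map_mul, h2]
      ring
  set β : F := ∏ j ∈ Finset.range m, (σ ^ j) (α:F) with hβ_def
  have hβ0 : β ≠ 0 := by
    rw [hβ_def]
    apply Finset.prod_ne_zero_iff.2
    intro j _
    intro hz
    exact hα0 ((σ^j).injective (by simp [hz]))
  have hσβ : σ β = β := by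
    have hmap : σ β = ∏ j ∈ Finset.range m, (σ ^ (j+1)) (α:F) := by
      rw [hβ_def, map_prod]
      apply Finset.prod_congr rfl
      intro j _
      rw [pow_succ']
      rfl
    have e1 := Finset.prod_range_succ' (fun j => (σ ^ j) (α:F)) m
    have e2 := Finset.prod_range_succ (fun j => (σ ^ j) (α:F)) m
    have key2 : (∏ j ∈ Finset.range m, (σ ^ (j+1)) (α:F)) * ((σ ^ 0) (α:F))
        = β * ((σ ^ m) (α:F)) := by
      rw [hβ_def]
      exact e1.symm.trans e2
    rw [hσm] at key2
    simp only [pow_zero] at key2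
    have key3 : σ β * (α:F) = β * (α:F) := by
      rw [hmap]
      simpa using key2
    exact mul_right_cancel₀ hα0 key3
  have hfixn : ∀ n : ℕ, (σ ^ n) β = β := by
    intro n
    induction n with
    | zero => rfl
    | succ k ih =>
      have : (σ ^ (k+1)) β = (σ ^ k) (σ β) := by rw [pow_succ]; rfl
      rw [this, hσβ, ih]
  set G := Subgroup.zpowers σ with hG_def
  have hfixz : ∀ g : G, (g : F ≃+* F) β = β := by
    rintro ⟨g, hg⟩
    obtain ⟨n, rfl⟩ := hg
    rcases n with n | n
    · simpa [zpow_natCast] using hfixn n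
    · simp only [zpow_negSucc]
      have h := hfixn (n+1)
      have h2 : ((σ^(n+1))⁻¹ * (σ^(n+1)) : F ≃+* F) β = β := by
        rw [inv_mul_cancel]; rfl
      calc ((σ^(n+1) : F ≃+* F)⁻¹) β = ((σ^(n+1) : F ≃+* F)⁻¹) ((σ^(n+1) : F ≃+* F) β) := by rw [h]
        _ = β := h2
  haveI : Fintype G := Fintype.ofFinite _
  set K := FixedPoints.subfield G F with hK_def
  haveI : Fintype K := Fintype.ofFinite _
  have hβK : β ∈ K := by
    show β ∈ MulAction.fixedPoints G F
    intro g
    exact hfixz g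
  have hrank : Module.finrank K F = m := by
    rw [hK_def, FixedPoints.finrank_eq_card G F, ← Nat.card_eq_fintype_card, Nat.card_zpowers]
  have hcardF : Fintype.card F = Fintype.card K ^ m := by
    rw [Module.card_eq_pow_finrank (K := K) (V := F), hrank]
  set q := Fintype.card K with hq_def
  have hq2 : 2 ≤ q := Fintype.one_lt_card
  have hqm : q ^ m = r ^ f := by rw [← hcardF, ← Nat.card_eq_fintype_card, hcard]
  obtain ⟨e, hef, hqe⟩ := (Nat.dvd_prime_pow hr).1 (hqm ▸ dvd_pow_self q (by omega : m ≠ 0))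
  have hf_em : e * m = f := by
    have hpow : r ^ (e*m) = r ^ f := by rw [pow_mul, ← hqe, hqm]
    exact Nat.pow_right_injective hr2 hpow
  have he1 : 1 ≤ e := by
    rcases Nat.eq_zero_or_pos e with h | h
    · subst h; simp at hqe; omega
    · exact h
  have hm2 : 2 ≤ m := by omega
  have hβpow : β ^ (q - 1) = 1 := by
    have h := FiniteField.pow_card_sub_one_eq_one (⟨β, hβK⟩ : K)
      (by simp [Subtype.ext_iff, hβ0])
    have h2 := congrArg (fun x : K => (x : F)) h
    push_cast at h2
    simpa using h2
  have hπm : ∀ x : F, (π ^ m) x = β * x := by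
    intro x
    rw [hform m x, hσm]
    rfl
  have hπmt : ∀ t, ∀ x : F, (π ^ (m*t)) x = β^t * x := by
    intro t
    induction t with
    | zero => intro x; simp
    | succ k ih =>
      intro x
      have hmk : m*(k+1) = m*k + m := by ring
      rw [hmk, pow_add]
      have : (π ^ (m*k) * π ^ m) x = (π ^ (m*k)) ((π ^ m) x) := rfl
      rw [this, hπm x, ih, pow_succ]
      ring
  have hπ1 : π ^ (m*(q-1)) = 1 := by
    ext x
    rw [hπmt (q-1) x, hβpow]
    simp
  have hle : orderOf π ≤ m*(q-1) :=
    Nat.le_of_dvd (Nat.mul_pos hm0 (by omega)) (orderOf_dvd_of_pow_eq_one hπ1)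
  have hx : r = 2 → 7 ≤ e * m := by
    intro hr2'
    have hfm : m ≤ e * m := Nat.le_mul_of_pos_left m he1
    by_contra hlt
    exact hnot ⟨hr2', by omega, by omega⟩
  have hkey := key r e m hr2 he1 hm2 hx
  have hnat : orderOf π * f ≤ r^f - 1 := by
    calc orderOf π * f ≤ (m*(q-1)) * f := Nat.mul_le_mul_right f hle
      _ = (e*m) * (m * (r^e - 1)) := by rw [mul_comm, ← hf_em, hqe]
      _ ≤ r^(e*m) - 1 := hkey
      _ = r^f - 1 := by rw [hf_em]
  have hfpos : (0:ℝ) < f := by exact_mod_cast hf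
  rw [le_div_iff₀ hfpos]
  have hcast : ((orderOf π * f : ℕ) : ℝ) ≤ ((r^f - 1 : ℕ) : ℝ) := Nat.cast_le.2 hnat
  rw [Nat.cast_sub hcard1] at hcast
  push_cast at hcast ⊢
  linarith
end

section
/- Let d = r^f be a power of a prime r and let L be a 2-transitive subgroup of AΓL(1,d) acting on the field 𝔽_d of order d. Let L_0 be the stabiliser of 0 in L and set X_0 = L_0 ∩ GL(1,d). Then every element of L_0 has order at most |X_0|. -/
open FixedPoints

private lemma cube_lt_two_pow : ∀ x : ℕ, 11 ≤ x → (x+1)^3 ≤ 2^x := by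
  intro x hx
  induction x with
  | zero => omega
  | succ n ih =>
    rcases Nat.lt_or_ge n 11 with h | h
    · interval_cases n <;> first | omega | norm_num
    · have h1 := ih (by omega)
      have hn2 : 121 ≤ n*n := Nat.mul_le_mul h h
      have h2 : (n+2)^3 ≤ 2*(n+1)^3 := by nlinarith
      calc (n+1+1)^3 ≤ 2*(n+1)^3 := h2
        _ ≤ 2*2^n := by omega
        _ = 2^(n+1) := by ring

set_option maxHeartbeats 2000000 in
private lemma keyNT (r d m v : ℕ) (hr : 2 ≤ r) (hd : 1 ≤ d) (hm : 2 ≤ m)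
    (hv1 : v ∣ d * m) (hv2 : v ∣ r ^ (d * m) - 1) :
    m * v * (r ^ d - 1) ≤ r ^ (d * m) - 1 := by
  have hdm : 0 < d * m := by positivity
  have hv0 : 0 < v := Nat.pos_of_dvd_of_pos hv1 hdm
  have hvle : v ≤ d * m := Nat.le_of_dvd hdm hv1
  by_cases hbig : m * (d * m) ≤ r ^ (d * (m - 1))
  · obtain ⟨k, rfl⟩ : ∃ k, m = k + 1 := ⟨m - 1, by omega⟩
    simp only [Nat.add_sub_cancel] at hbig
    have hab : r ^ (d * k) * r ^ d = r ^ (d * (k+1)) := by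
      rw [← pow_add]; ring_nf
    have hb1 : (1:ℕ) ≤ r ^ d := Nat.one_le_pow _ _ (by omega)
    have ha1 : (1:ℕ) ≤ r ^ (d * k) := Nat.one_le_pow _ _ (by omega)
    have hmv : (k+1) * v ≤ r ^ (d * k) := le_trans (by nlinarith) hbig
    have step : (k+1) * v * (r ^ d - 1) ≤ r ^ (d*k) * (r ^ d - 1) :=
      Nat.mul_le_mul_right _ hmv
    refine le_trans step ?_
    have : r ^ (d*k) * (r ^ d - 1) = r ^ (d*(k+1)) - r ^ (d*k) := by
      rw [Nat.mul_sub, mul_one, hab]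
    omega
  · push_neg at hbig
    obtain ⟨k, rfl⟩ : ∃ k, m = k + 2 := ⟨m - 2, by omega⟩
    have hs : k + 2 - 1 = k + 1 := by omega
    rw [hs] at hbig
    have h2 : 2 ^ (d * (k+1)) ≤ r ^ (d * (k+1)) := Nat.pow_le_pow_left hr _
    have hxb : d * (k+1) ≤ 10 := by
      by_contra hcon
      push_neg at hcon
      have h3 : (d*(k+1)+1)^3 ≤ 2 ^ (d*(k+1)) := cube_lt_two_pow _ (by omega)
      have hX1 : k+2 ≤ d*(k+1)+1 := by nlinarith
      have hX2 : d*(k+2) ≤ (d*(k+1)+1)^2 := by nlinarith [sq_nonneg (d*k+d)]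
      have h4 : (k+2) * (d * (k+2)) ≤ (d*(k+1)+1)^3 := by
        calc (k+2) * (d * (k+2)) ≤ (d*(k+1)+1) * ((d*(k+1)+1)^2) := Nat.mul_le_mul hX1 hX2
          _ = (d*(k+1)+1)^3 := by ring
      omega
    have hk1 : k+1 ≤ d*(k+1) := Nat.le_mul_of_pos_left _ (by omega)
    have hd1 : d ≤ d*(k+1) := Nat.le_mul_of_pos_right _ (by omega)
    have hkle : k ≤ 9 := by omega
    have hdle : d ≤ 10 := by omega
    have hrle : r ≤ r ^ (d * (k+1)) := Nat.le_self_pow (by positivity) r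
    clear h2 hk1 hd1 hv0 hdm
    interval_cases d <;> interval_cases k <;>
      first
        | omega
        | (exfalso
           have h2 : 2 ^ (d * (k+1)) ≤ r ^ (d * (k+1)) := Nat.pow_le_pow_left hr _
           norm_num at h2 hbig
           omega
           done)
        | (norm_num at hbig hrle hvle hv1 ⊢
           have hrb : r ≤ 130 := by omega
           interval_cases r <;>
             first
               | (exfalso; omega; done)
               | (exfalso; revert hbig; norm_num; done)
               | (norm_num at hv2 ⊢
                  interval_cases v <;> revert hv1 hv2 <;> decide
                  done)
               | (interval_cases v <;> revert hv1 hv2 <;> decide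
                  done)
           done)

private lemma finiteRingAut (F : Type) [Field F] [Finite F] : Finite (F ≃+* F) :=
  Finite.of_injective (fun σ => (σ : F → F)) (fun _ _ h => RingEquiv.ext (congrFun h))

private lemma card_fixed_aux {F : Type} [Field F] [Fintype F] {r f : ℕ}
    (hr : r.Prime) (hq : Fintype.card F = r ^ f)
    (G : Type) [Group G] [Fintype G] [MulSemiringAction G F] [FaithfulSMul G F] :
    ∃ a : ℕ, 1 ≤ a ∧ a * Fintype.card G = f ∧
      Nat.card (FixedPoints.subfield G F) = r ^ a := by
  classical
  haveI : Fintype (FixedPoints.subfield G F) := Fintype.ofFinite _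
  have h1 : Module.finrank (FixedPoints.subfield G F) F = Fintype.card G :=
    FixedPoints.finrank_eq_card G F
  have h2 : Fintype.card F = Fintype.card (FixedPoints.subfield G F) ^
      Module.finrank (FixedPoints.subfield G F) F := Module.card_eq_pow_finrank
  rw [h1, hq] at h2
  have hG1 : 0 < Fintype.card G := Fintype.card_pos
  have hdvd : Fintype.card (FixedPoints.subfield G F) ∣ r ^ f := by
    rw [h2]; exact dvd_pow_self _ (by omega)
  obtain ⟨a, ha, hcK⟩ := (Nat.dvd_prime_pow hr).mp hdvd
  rw [hcK] at h2
  have hK2 : 2 ≤ r ^ a := hcK ▸ Fintype.one_lt_card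
  have ha1 : 1 ≤ a := by
    rcases Nat.eq_zero_or_pos a with h | h
    · subst h; simp at hK2
    · exact h
  refine ⟨a, ha1, ?_, by rw [Nat.card_eq_fintype_card, hcK]⟩
  have h3 : r ^ (a * Fintype.card G) = r ^ f := by rw [pow_mul, h2]
  exact Nat.pow_right_injective hr.two_le h3

private lemma ringAut_card_dvd {F : Type} [Field F] [Fintype F] {r f : ℕ}
    (hr : r.Prime) (hq : Fintype.card F = r ^ f) :
    Nat.card (F ≃+* F) ∣ f := by
  haveI : Finite (F ≃+* F) := finiteRingAut F
  haveI : Fintype (F ≃+* F) := Fintype.ofFinite _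
  obtain ⟨a, _, haf, _⟩ := card_fixed_aux hr hq (F ≃+* F)
  rw [Nat.card_eq_fintype_card]
  exact Dvd.intro_left a haf

private lemma sigma_fix_aux {F : Type} [Field F] [Fintype F] {r f : ℕ}
    (hr : r.Prime) (hq : Fintype.card F = r ^ f) (σ : F ≃+* F) :
    ∃ a : ℕ, 1 ≤ a ∧ a * orderOf σ = f ∧
      ∀ β : F, β ≠ 0 → σ β = β → β ^ (r ^ a - 1) = 1 := by
  haveI : Finite (F ≃+* F) := finiteRingAut F
  haveI : Fintype ↥(Subgroup.zpowers σ) := Fintype.ofFinite _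
  haveI : FaithfulSMul ↥(Subgroup.zpowers σ) F :=
    ⟨fun {g₁ g₂} h => Subtype.ext (RingEquiv.ext fun x => h x)⟩
  obtain ⟨a, ha1, haf, hcK⟩ := card_fixed_aux hr hq ↥(Subgroup.zpowers σ)
  have hcard : Fintype.card ↥(Subgroup.zpowers σ) = orderOf σ := by
    rw [← Nat.card_eq_fintype_card, Nat.card_zpowers]
  refine ⟨a, ha1, by rw [← hcard]; exact haf, ?_⟩
  intro β hβ0 hβfix
  have hmul : ∀ (τ ρ : F ≃+* F) (x : F), (τ * ρ) x = τ (ρ x) := fun _ _ _ => rfl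
  have hfix : ∀ n : ℕ, (σ ^ n) β = β := by
    intro n
    induction n with
    | zero => rfl
    | succ k ih => rw [pow_succ, hmul, hβfix, ih]
  have hβK : β ∈ FixedPoints.subfield ↥(Subgroup.zpowers σ) F := by
    show β ∈ MulAction.fixedPoints ↥(Subgroup.zpowers σ) F
    rw [MulAction.mem_fixedPoints]
    rintro ⟨g, hg⟩
    obtain ⟨n, hn⟩ := mem_powers_iff_mem_zpowers.mpr hg
    show g • β = β
    rw [← hn]
    exact hfix n
  set K := FixedPoints.subfield ↥(Subgroup.zpowers σ) F
  haveI : Fintype K := Fintype.ofFinite _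
  have hcK' : Fintype.card K = r ^ a := by rw [← Nat.card_eq_fintype_card, hcK]
  have hβK0 : (⟨β, hβK⟩ : K) ≠ 0 := by
    intro h
    exact hβ0 (congrArg Subtype.val h)
  have h5 := FiniteField.pow_card_sub_one_eq_one (⟨β, hβK⟩ : K) hβK0
  rw [hcK'] at h5
  have h6 := congrArg Subtype.val h5
  push_cast at h6
  simpa using h6

/-- Let `d = r ^ f` be a prime power and let `L` be a `2`-transitive subgroup of
`AΓL(1,d)` acting on the field `F` of order `d`. Let `L₀` be the stabiliser of `0`
in `L` and `X₀ = L₀ ⊓ GL(1,d)`. Then every element of `L₀` has order at most `|X₀|`. -/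
theorem stmt10 (r f : ℕ) (hr : r.Prime) (hf : 0 < f)
    (F : Type) [Field F] (hcard : Nat.card F = r ^ f)
    (AGammaL GL1 : Subgroup (Equiv.Perm F))
    (hAGammaL : ∀ π : Equiv.Perm F, π ∈ AGammaL ↔
      ∃ (α : Fˣ) (σ : F ≃+* F) (u : F), ∀ x : F, π x = ↑α * σ x + u)
    (hGL1 : ∀ π : Equiv.Perm F, π ∈ GL1 ↔ ∃ α : Fˣ, ∀ x : F, π x = ↑α * x)
    (L : Subgroup (Equiv.Perm F)) (hLsub : L ≤ AGammaL)
    (hLtrans : ∀ x y : F, ∃ g ∈ L, g x = y)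
    (hL2trans : ∀ x y : F, x ≠ 0 → y ≠ 0 → ∃ g ∈ L, g 0 = 0 ∧ g x = y) :
    ∀ g ∈ L ⊓ MulAction.stabilizer (Equiv.Perm F) (0 : F),
      orderOf g ≤
        Nat.card ↥((L ⊓ MulAction.stabilizer (Equiv.Perm F) (0 : F)) ⊓ GL1) := by
  classical
  haveI hFinF : Finite F := Nat.finite_of_card_ne_zero (by
    rw [hcard]; exact pow_ne_zero f hr.pos.ne')
  haveI : Fintype F := Fintype.ofFinite F
  haveI : Finite (F ≃+* F) := finiteRingAut F
  have hq : Fintype.card F = r ^ f := by rw [← Nat.card_eq_fintype_card, hcard]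
  set L₀ : Subgroup (Equiv.Perm F) := L ⊓ MulAction.stabilizer (Equiv.Perm F) (0 : F)
    with hL₀def
  set X₀ : Subgroup (Equiv.Perm F) := L₀ ⊓ GL1 with hX₀def
  -- structure of elements of L₀
  have hstruct : ∀ gp : Equiv.Perm F, gp ∈ L₀ → gp 1 ≠ 0 ∧
      ∃ σ : F ≃+* F, ∀ x, gp x = gp 1 * σ x := by
    intro gp hgp
    obtain ⟨hgpL, hgps⟩ := hgp
    obtain ⟨α, σ, u, hform⟩ := (hAGammaL gp).1 (hLsub hgpL)
    have h0 : gp 0 = 0 := hgps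
    have hu : u = 0 := by
      have h := hform 0
      rw [h0, map_zero, mul_zero, zero_add] at h
      exact h.symm
    have h1 : gp 1 = (α : F) := by
      have := hform 1
      simp [hu] at this
      simpa using this
    refine ⟨by rw [h1]; exact α.ne_zero, σ, fun x => ?_⟩
    rw [hform x, hu, h1, add_zero]
  have hTex : ∀ gp : ↥L₀, ∃ σ : F ≃+* F,
      ∀ x, (gp : Equiv.Perm F) x = (gp : Equiv.Perm F) 1 * σ x :=
    fun gp => (hstruct gp gp.2).2
  have h1ne : ∀ gp : ↥L₀, (gp : Equiv.Perm F) 1 ≠ 0 := fun gp => (hstruct gp gp.2).1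
  let T : ↥L₀ → (F ≃+* F) := fun gp => Classical.choose (hTex gp)
  have hTspec : ∀ gp : ↥L₀, ∀ x, (gp : Equiv.Perm F) x = (gp : Equiv.Perm F) 1 * (T gp) x :=
    fun gp => Classical.choose_spec (hTex gp)
  have huniq : ∀ (gp : ↥L₀) (τ : F ≃+* F),
      (∀ x, (gp : Equiv.Perm F) x = (gp : Equiv.Perm F) 1 * τ x) → T gp = τ := by
    intro gp τ hτ
    ext x
    exact mul_left_cancel₀ (h1ne gp) ((hTspec gp x).symm.trans (hτ x))
  have hmulapp : ∀ (τ ρ : F ≃+* F) (x : F), (τ * ρ) x = τ (ρ x) := fun _ _ _ => rfl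
  have hTmul : ∀ g₁ g₂ : ↥L₀, T (g₁ * g₂) = T g₁ * T g₂ := by
    intro g₁ g₂
    apply huniq
    intro x
    calc ((g₁*g₂ : ↥L₀) : Equiv.Perm F) x
        = (g₁ : Equiv.Perm F) ((g₂ : Equiv.Perm F) x) := rfl
      _ = (g₁ : Equiv.Perm F) 1 * T g₁ ((g₂ : Equiv.Perm F) x) := hTspec g₁ _
      _ = (g₁ : Equiv.Perm F) 1 * T g₁ ((g₂ : Equiv.Perm F) 1 * T g₂ x) := by
          rw [hTspec g₂ x]
      _ = (g₁ : Equiv.Perm F) 1 * (T g₁ ((g₂ : Equiv.Perm F) 1) * T g₁ (T g₂ x)) := by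
          rw [map_mul]
      _ = ((g₁ : Equiv.Perm F) ((g₂ : Equiv.Perm F) 1)) * (T g₁ * T g₂) x := by
          rw [hTspec g₁ ((g₂ : Equiv.Perm F) 1), hmulapp]; ring
      _ = ((g₁*g₂ : ↥L₀) : Equiv.Perm F) 1 * (T g₁ * T g₂) x := rfl
  let Thom : ↥L₀ →* (F ≃+* F) := MonoidHom.mk' T hTmul
  -- orbit of 1 is everything nonzero
  have horbit : MulAction.orbit ↥L₀ (1:F) = {x : F | x ≠ 0} := by
    ext x
    rw [MulAction.mem_orbit_iff]
    constructor
    · rintro ⟨gp, rfl⟩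
      exact h1ne gp
    · intro hx
      obtain ⟨gp, hgpL, hgp0, hgp1⟩ := hL2trans 1 x one_ne_zero hx
      exact ⟨⟨gp, Subgroup.mem_inf.mpr ⟨hgpL, by
        simpa [MulAction.mem_stabilizer_iff] using hgp0⟩⟩, hgp1⟩
  have hn_orbit : Nat.card (MulAction.orbit ↥L₀ (1:F)) = r^f - 1 := by
    rw [horbit]
    have e1 : ↥{x : F | x ≠ 0} ≃ Fˣ :=
      (Equiv.subtypeEquivRight (fun x => Iff.rfl)).trans (unitsEquivNeZero (G₀ := F)).symm
    rw [Nat.card_congr e1, Nat.card_units, hcard]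
  have hdvd1 : (r^f - 1) ∣ Nat.card ↥L₀ := by
    have h1 : (MulAction.stabilizer ↥L₀ (1:F)).index =
        (MulAction.orbit ↥L₀ (1:F)).ncard := MulAction.index_stabilizer _ _
    have h2 := Subgroup.index_dvd_card (MulAction.stabilizer ↥L₀ (1:F))
    rw [h1] at h2
    rwa [← Nat.card_coe_set_eq, hn_orbit] at h2
  -- scalars
  have hGLscal : ∀ gp : Equiv.Perm F, gp ∈ GL1 → ∀ x, gp x = gp 1 * x := by
    intro gp hgp x
    obtain ⟨α, hα⟩ := (hGL1 gp).1 hgp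
    rw [hα x, hα 1, mul_one]
  -- kernel of Thom is X₀
  have hkercard : Nat.card Thom.ker = Nat.card ↥X₀ := by
    apply Nat.card_congr
    refine ⟨fun gp => ⟨gp.1.1, gp.1.2, (hGL1 _).mpr
        ⟨Units.mk0 ((gp.1 : Equiv.Perm F) 1) (h1ne gp.1), fun x => ?_⟩⟩,
      fun gp => ⟨⟨gp.1, gp.2.1⟩, ?_⟩, fun gp => Subtype.ext (Subtype.ext rfl),
      fun gp => Subtype.ext rfl⟩
    · have h := hTspec gp.1 x
      have hker : T gp.1 = 1 := gp.2
      rw [hker] at h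
      simpa using h
    · have : T ⟨gp.1, gp.2.1⟩ = 1 := by
        apply huniq
        intro x
        simpa using hGLscal gp.1 gp.2.2 x
      exact this
  have hLc : Nat.card ↥L₀ = Nat.card Thom.range * Nat.card ↥X₀ := by
    rw [Subgroup.card_eq_card_quotient_mul_card_subgroup Thom.ker,
        Nat.card_congr (QuotientGroup.quotientKerEquivRange Thom).toEquiv, hkercard]
  have hedvd : Nat.card Thom.range ∣ f :=
    dvd_trans (Subgroup.card_subgroup_dvd_card _) (ringAut_card_dvd hr hq)
  -- X₀ embeds into units
  have hsdvd : Nat.card ↥X₀ ∣ r^f - 1 := by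
    let u : ↥X₀ →* Fˣ :=
      { toFun := fun gp => Units.mk0 ((gp : Equiv.Perm F) 1) (h1ne ⟨gp.1, gp.2.1⟩)
        map_one' := by ext; rfl
        map_mul' := by
          intro g₁ g₂
          ext
          show ((g₁ : Equiv.Perm F) ((g₂ : Equiv.Perm F) 1)) = _
          rw [hGLscal g₁.1 g₁.2.2 ((g₂ : Equiv.Perm F) 1)]
          rfl }
    have hinj : Function.Injective u := by
      intro g₁ g₂ h
      have h1 : (g₁ : Equiv.Perm F) 1 = (g₂ : Equiv.Perm F) 1 := congrArg Units.val h
      apply Subtype.ext; apply Equiv.ext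
      intro x
      rw [hGLscal g₁.1 g₁.2.2 x, hGLscal g₂.1 g₂.2.2 x, h1]
    calc Nat.card ↥X₀ = Nat.card u.range :=
          Nat.card_congr (MulEquiv.toEquiv (MonoidHom.ofInjective hinj))
      _ ∣ Nat.card Fˣ := Subgroup.card_subgroup_dvd_card _
      _ = r^f - 1 := by rw [Nat.card_units, hcard]
  -- abbreviations
  set s : ℕ := Nat.card ↥X₀ with hsdef
  have hs0 : 0 < s := Nat.card_pos
  set v : ℕ := (r^f - 1) / s with hvdef
  have hsv : s * v = r^f - 1 := Nat.mul_div_cancel' hsdvd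
  have hn1 : 1 ≤ r^f - 1 := by
    have h2f : 2 ≤ r^f := by
      calc 2 = 2^1 := rfl
        _ ≤ 2^f := Nat.pow_le_pow_right (by norm_num) hf
        _ ≤ r^f := Nat.pow_le_pow_left hr.two_le f
    omega
  have hv0 : 0 < v := by
    rcases Nat.eq_zero_or_pos v with h | h
    · rw [h, mul_zero] at hsv; omega
    · exact h
  have hvf : v ∣ f := by
    have hns : (r^f - 1) ∣ s * Nat.card Thom.range := by
      rw [mul_comm, ← hLc]; exact hdvd1
    have h1 : s * v ∣ s * Nat.card Thom.range := by rw [hsv]; exact hns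
    exact dvd_trans ((Nat.mul_dvd_mul_iff_left hs0).mp h1) hedvd
  -- now the per-element argument
  intro g hg
  set gS : ↥L₀ := ⟨g, hg⟩ with hgSdef
  set σ : F ≃+* F := T gS with hσdef
  set m : ℕ := orderOf σ with hmdef
  have hm0 : 0 < m := orderOf_pos σ
  have hcoepow : ∀ i : ℕ, ((gS^i : ↥L₀) : Equiv.Perm F) = g^i := by
    intro i
    exact SubmonoidClass.coe_pow _ _
  have hTpow : ∀ i : ℕ, T (gS^i) = σ^i := fun i => Thom.map_pow gS i
  have hgpow : ∀ (i : ℕ) (x : F), (g^i) x = (g^i) 1 * (σ^i) x := by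
    intro i x
    have h := hTspec (gS^i) x
    rwa [hcoepow i, hTpow i] at h
  rcases Nat.lt_or_ge m 2 with hm2 | hm2
  · -- m = 1 : g is a scalar
    have hm1 : m = 1 := by omega
    have hσ1 : σ = 1 := orderOf_eq_one_iff.mp hm1
    have hgmem : g ∈ X₀ := by
      refine ⟨hg, (hGL1 g).mpr ⟨Units.mk0 (g 1) (h1ne gS), fun x => ?_⟩⟩
      have h := hTspec gS x
      rw [← hσdef, hσ1] at h
      simpa using h
    have : orderOf g ∣ s := by
      rw [← Subgroup.orderOf_mk g hgmem]
      exact orderOf_dvd_natCard _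
    exact Nat.le_of_dvd hs0 this
  · -- m ≥ 2
    obtain ⟨a, ha1, ham, hfixpow⟩ := sigma_fix_aux hr hq σ
    rw [← hmdef] at ham
    set β : F := (g^m) 1 with hβdef
    have hβ0 : β ≠ 0 := by
      have := h1ne (gS^m)
      rwa [hcoepow m] at this
    have hσm : σ ^ m = 1 := by rw [hmdef]; exact pow_orderOf_eq_one σ
    have hscal : ∀ x, (g^m) x = β * x := by
      intro x
      have h := hgpow m x
      rw [hσm] at h
      simpa using h
    have hσβ : σ β = β := by
      have e1 : (g^m) (g 1) = β * (g 1) := hscal (g 1)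
      have e2 : g ((g^m) 1) = (g 1) * σ β := hTspec gS ((g^m) 1)
      have e3 : (g^m) (g 1) = g ((g^m) 1) := by
        have hc : g^m * g = g * g^m := by rw [← pow_succ, ← pow_succ']
        calc (g^m) (g 1) = (g^m * g) 1 := rfl
          _ = (g * g^m) 1 := by rw [hc]
          _ = g ((g^m) 1) := rfl
      have e4 : (g 1) * σ β = (g 1) * β := by
        rw [← e2, e3.symm, e1, mul_comm]
      exact mul_left_cancel₀ (h1ne gS) e4
    have hβpow : β ^ (r^a - 1) = 1 := hfixpow β hβ0 hσβ
    set βu : Fˣ := Units.mk0 β hβ0 with hβudef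
    set k : ℕ := orderOf βu with hkdef
    have hk0 : 0 < k := orderOf_pos βu
    have hkdvd : k ∣ r^a - 1 := by
      apply orderOf_dvd_of_pow_eq_one
      ext
      push_cast
      exact hβpow
    have hra2 : 2 ≤ r^a := by
      have h1 : r ≤ r^a := Nat.le_self_pow (by omega) r
      have h2 := hr.two_le
      omega
    have hscalk : ∀ (j : ℕ) (x : F), ((g^m)^j) x = β^j * x := by
      intro j
      induction j with
      | zero => intro x; simp
      | succ i ih =>
        intro x
        rw [pow_succ]
        show ((g^m)^i) ((g^m) x) = _
        rw [hscal, ih, pow_succ]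
        ring
    have hgmk : g ^ (m * k) = 1 := by
      rw [pow_mul]
      apply Equiv.ext
      intro x
      have h := hscalk k x
      have hβk : β ^ k = 1 := by
        have := pow_orderOf_eq_one βu
        have h2 := congrArg Units.val this
        push_cast at h2
        exact h2
      rw [hβk, one_mul] at h
      simpa using h
    have hNle : orderOf g ≤ m * k :=
      Nat.le_of_dvd (by positivity) (orderOf_dvd_of_pow_eq_one hgmk)
    have hkey := keyNT r a m v hr.two_le ha1 hm2 (by rw [ham]; exact hvf) (by
      rw [ham, ← hsv]
      exact Dvd.intro_left s rfl)
    rw [ham] at hkey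
    have hms : m * (r^a - 1) ≤ s := by
      have h1 : (m * (r^a - 1)) * v ≤ s * v := by
        rw [hsv]
        calc (m * (r^a - 1)) * v = m * v * (r^a - 1) := by ring
          _ ≤ r^f - 1 := hkey
      exact Nat.le_of_mul_le_mul_right h1 hv0
    calc orderOf g ≤ m * k := hNle
      _ ≤ m * (r^a - 1) := Nat.mul_le_mul_left m (Nat.le_of_dvd (by omega) hkdvd)
      _ ≤ s := hms
end

section
/- Let d = r^f be a power of a prime r, let A be a subgroup of the multiplicative group 𝔽_d^×, and let X be the group of permutations of 𝔽_d of the form x ↦ a·x + u with a ∈ A and u ∈ 𝔽_d (so |X| = d·|A|). Let F be a field whose characteristic does not divide |X|, and let n be a positive integer such that X is isomorphic to a subgroup of GL(n,F). Then n ≥ |A|. -/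
open Module


lemma aux_indep {K M ι U : Type*} [Field K] [AddCommGroup M] [Module K M]
    (T : U → Module.End K M) (χ : ι → U → K) (w : ι → M)
    (hw : ∀ i, w i ≠ 0) (heig : ∀ i u, T u (w i) = χ i u • w i)
    (hχ : ∀ i j, i ≠ j → ∃ u, χ i u ≠ χ j u) : LinearIndependent K w := by
  classical
  rw [linearIndependent_iff']
  intro s
  induction s using Finset.strongInduction with
  | _ s ih =>
    intro g hg i hi
    have key : ∀ j ∈ s.erase i, g j = 0 := by
      intro j hj
      have hji : j ≠ i := Finset.ne_of_mem_erase hj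
      obtain ⟨u, hu⟩ := hχ j i hji
      have h1 : ∑ k ∈ s, (g k * (χ k u - χ i u)) • w k = 0 := by
        have h2 : (T u) (∑ k ∈ s, g k • w k) = 0 := by rw [hg]; simp
        rw [map_sum] at h2
        simp only [map_smul, heig] at h2
        have h3 : ∑ k ∈ s, (g k * χ i u) • w k = 0 := by
          calc ∑ k ∈ s, (g k * χ i u) • w k = (χ i u) • ∑ k ∈ s, g k • w k := by
                rw [Finset.smul_sum]
                exact Finset.sum_congr rfl fun k _ => by
                  rw [smul_smul, mul_comm]
            _ = 0 := by rw [hg, smul_zero]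
        calc ∑ k ∈ s, (g k * (χ k u - χ i u)) • w k
            = ∑ k ∈ s, (g k • χ k u • w k - (g k * χ i u) • w k) := by
              apply Finset.sum_congr rfl; intro k _
              rw [mul_sub, sub_smul, smul_smul]
          _ = 0 := by rw [Finset.sum_sub_distrib, h2, h3, sub_zero]
      have h4 : ∑ k ∈ s.erase i, (g k * (χ k u - χ i u)) • w k = 0 := by
        rw [Finset.sum_erase _ (by simp), h1]
      have h5 := ih (s.erase i) (Finset.erase_ssubset hi) _ h4 j hj
      rcases mul_eq_zero.mp h5 with h | h
      · exact h
      · exact absurd (sub_eq_zero.mp h) hu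
    have h6 : ∑ k ∈ s, g k • w k = g i • w i := by
      apply Finset.sum_eq_single_of_mem i hi
      intro j hj hji
      rw [key j (Finset.mem_erase.mpr ⟨hji, hj⟩), zero_smul]
    rw [hg] at h6
    rcases smul_eq_zero.mp h6.symm with h | h
    · exact h
    · exact absurd h (hw i)

lemma aux_simul {K M U : Type*} [Field K] [IsAlgClosed K] [AddCommGroup M] [Module K M]
    [FiniteDimensional K M]
    (T : U → Module.End K M) (hcomm : ∀ u v, Commute (T u) (T v))
    (E : Submodule K M) (hE : E ≠ ⊥) (hEinv : ∀ u, ∀ x ∈ E, T u x ∈ E) :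
    ∃ W : Submodule K M, W ≠ ⊥ ∧ W ≤ E ∧ ∀ u, ∃ c : K, ∀ x ∈ W, T u x = c • x := by
  classical
  set S : Set (Submodule K M) :=
    {W | W ≠ ⊥ ∧ W ≤ E ∧ ∀ u, ∀ x ∈ W, T u x ∈ W} with hS
  have hES : E ∈ S := ⟨hE, le_rfl, hEinv⟩
  have hne : {k | ∃ W ∈ S, finrank K W = k}.Nonempty := ⟨finrank K E, E, hES, rfl⟩
  obtain ⟨W, hWS, hWrank⟩ := Nat.sInf_mem hne
  refine ⟨W, hWS.1, hWS.2.1, fun u => ?_⟩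
  obtain ⟨hWbot, hWE, hWinv⟩ := hWS
  have : Nontrivial W := Submodule.nontrivial_iff_ne_bot.mpr hWbot
  set Tu : Module.End K W := (T u).restrict (hWinv u) with hTu
  obtain ⟨c, hc⟩ := Module.End.exists_eigenvalue Tu
  refine ⟨c, ?_⟩
  obtain ⟨⟨x, hxW⟩, hxe, hx0⟩ := hc.exists_hasEigenvector
  have hxe' : T u x = c • x := by
    have := hxe
    rw [Module.End.mem_eigenspace_iff] at this
    exact congrArg Subtype.val this
  have hx0' : x ≠ 0 := fun h => hx0 (Subtype.ext h)
  set W' : Submodule K M := W ⊓ Module.End.eigenspace (T u) c with hW'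
  have hW'S : W' ∈ S := by
    refine ⟨?_, inf_le_left.trans hWE, ?_⟩
    · intro hbot
      have hxW' : x ∈ W' := by
        refine Submodule.mem_inf.mpr ⟨hxW, ?_⟩
        rw [Module.End.mem_eigenspace_iff]; exact hxe'
      rw [hbot, Submodule.mem_bot] at hxW'
      exact hx0' hxW'
    · intro v y hy
      obtain ⟨hyW, hye⟩ := Submodule.mem_inf.mp hy
      rw [Module.End.mem_eigenspace_iff] at hye
      refine Submodule.mem_inf.mpr ⟨hWinv v y hyW, ?_⟩
      rw [Module.End.mem_eigenspace_iff]
      calc (T u) ((T v) y) = (T v) ((T u) y) := by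
            have := (hcomm u v).eq
            exact congrFun (congrArg DFunLike.coe this) y
        _ = c • (T v) y := by rw [hye, map_smul]
  have hle : W' ≤ W := inf_le_left
  have hrank : finrank K W ≤ finrank K W' := by
    rw [hWrank]
    exact Nat.sInf_le ⟨W', hW'S, rfl⟩
  have hWW : W' = W := Submodule.eq_of_le_of_finrank_le hle hrank
  intro y hyW
  have : y ∈ W' := hWW ▸ hyW
  exact Module.End.mem_eigenspace_iff.mp (Submodule.mem_inf.mp this).2

lemma aux_eig {K M : Type*} [Field K] [IsAlgClosed K] [AddCommGroup M] [Module K M]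
    [FiniteDimensional K M] [Nontrivial M] {T : Module.End K M} {r : ℕ}
    (hrK : (r : K) ≠ 0) (hT : T ^ r = 1) (hT1 : T ≠ 1) :
    ∃ ζ : K, ζ ≠ 1 ∧ T.HasEigenvalue ζ := by
  have hint : IsIntegral K T := Algebra.IsIntegral.isIntegral T
  set m := minpoly K T with hm
  have haev : (Polynomial.aeval T) (Polynomial.X ^ r - Polynomial.C (1:K)) = 0 := by
    simp [hT]
  have hdvd : m ∣ (Polynomial.X ^ r - Polynomial.C 1) := minpoly.dvd K T haev
  have hsep : (Polynomial.X ^ r - Polynomial.C (1:K)).Separable :=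
    Polynomial.separable_X_pow_sub_C 1 hrK one_ne_zero
  have hmsep : m.Separable := Polynomial.Separable.of_dvd hsep hdvd
  have hmonic : m.Monic := minpoly.monic hint
  have hsplit : m.Splits := IsAlgClosed.splits m
  have hdeg : 0 < m.natDegree := minpoly.natDegree_pos hint
  by_contra hcon
  push_neg at hcon
  have hroots : ∀ ζ ∈ m.roots, ζ = (1:K) := by
    intro ζ hζ
    have hev : T.HasEigenvalue ζ :=
      Module.End.hasEigenvalue_of_isRoot (Polynomial.isRoot_of_mem_roots hζ)
    by_contra h
    exact hcon ζ h hev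
  have hprod := hsplit.eq_prod_roots_of_monic hmonic
  have hrep : m.roots.map (fun a => Polynomial.X - Polynomial.C a) =
      Multiset.replicate (Multiset.card m.roots) (Polynomial.X - Polynomial.C (1:K)) := by
    rw [Multiset.eq_replicate]
    constructor
    · rw [Multiset.card_map]
    · intro b hb
      obtain ⟨a, ha, rfl⟩ := Multiset.mem_map.mp hb
      rw [hroots a ha]
  rw [hrep, Multiset.prod_replicate] at hprod
  -- roots nonempty
  have hmne : m ≠ 0 := minpoly.ne_zero hint
  obtain ⟨z, hz⟩ := IsAlgClosed.exists_root m (by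
    intro h0
    have : m.natDegree = 0 := Polynomial.natDegree_eq_zero_iff_degree_le_zero.mpr h0.le
    omega)
  have hzmem : z ∈ m.roots := (Polynomial.mem_roots hmne).mpr hz
  have hcard1 : 0 < Multiset.card m.roots := Multiset.card_pos_iff_exists_mem.mpr ⟨z, hzmem⟩
  have hcard2 : Multiset.card m.roots ≤ 1 := by
    by_contra hk
    push_neg at hk
    have hdvd2 : (Polynomial.X - Polynomial.C (1:K)) * (Polynomial.X - Polynomial.C (1:K)) ∣ m := by
      rw [hprod, ← pow_two]
      exact pow_dvd_pow _ hk
    exact Polynomial.not_isUnit_X_sub_C 1 (hmsep.squarefree _ hdvd2)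
  have hcard : Multiset.card m.roots = 1 := le_antisymm hcard2 hcard1
  rw [hcard, pow_one] at hprod
  have := minpoly.aeval K T
  rw [← hm, hprod] at this
  simp only [map_sub, Polynomial.aeval_X, Polynomial.aeval_C] at this
  apply hT1
  have h1 : T - 1 = 0 := by
    convert this using 2
    simp [Algebra.algebraMap_eq_smul_one]
  rw [sub_eq_zero] at h1
  exact h1


/-- Let `d = r ^ f` be a prime power, `A` a subgroup of `Fˣ` for the field `F` of
order `d`, and `X` the group of permutations of `F` of the form `x ↦ a * x + u` with
`a ∈ A`, `u ∈ F`. If `F'` is a field whose characteristic does not divide `|X|` and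
`X` is isomorphic to a subgroup of `GL(n, F')`, then `n ≥ |A|`. -/
theorem stmt11 (r f : ℕ) (hr : r.Prime) (hf : 0 < f)
    (F : Type) [Field F] (hcardF : Nat.card F = r ^ f)
    (A : Subgroup Fˣ)
    (X : Subgroup (Equiv.Perm F))
    (hX : ∀ π : Equiv.Perm F, π ∈ X ↔ ∃ a ∈ A, ∃ u : F, ∀ x : F, π x = ↑a * x + u)
    (F' : Type) [Field F'] (hchar : ¬ (ringChar F' ∣ Nat.card ↥X))
    (n : ℕ) (hn : 0 < n)
    (φ : ↥X →* Matrix.GeneralLinearGroup (Fin n) F') (hφ : Function.Injective φ) :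
    Nat.card ↥A ≤ n := by
  classical
  -- finiteness and characteristic of F
  have hcardpos : 0 < Nat.card F := by rw [hcardF]; exact pow_pos hr.pos f
  have hFfin : Finite F := (Nat.card_pos_iff.mp hcardpos).2
  haveI : Fintype F := Fintype.ofFinite F
  have hFnt : Nontrivial F := by
    rw [← Finite.one_lt_card_iff_nontrivial, hcardF]
    exact Nat.one_lt_pow hf.ne' hr.one_lt
  have hchF : CharP F r := by
    set p := ringChar F with hp
    haveI hpF : CharP F p := ringChar.charP F
    have hpprime : p.Prime := CharP.char_is_prime F p
    have hdvd : p ∣ r ^ f := by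
      rw [← CharP.cast_eq_zero_iff F p (r ^ f), ← hcardF, Nat.card_eq_fintype_card]
      exact FiniteField.cast_card_eq_zero F
    have : p = r := by
      rcases (Nat.prime_dvd_prime_iff_eq hpprime hr).mp (hpprime.dvd_of_dvd_pow hdvd) with h
      exact h
    rw [← this]; exact hpF
  have hrF : (r : F) = 0 := CharP.cast_eq_zero F r
  -- translation elements of X
  have memt : ∀ u : F, Equiv.addRight u ∈ X := fun u =>
    (hX _).mpr ⟨1, one_mem A, u, fun x => by simp⟩
  set t : F → ↥X := fun u => ⟨Equiv.addRight u, memt u⟩ with ht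
  have htapp : ∀ u x : F, ((t u : Equiv.Perm F) : F → F) x = x + u := fun u x => rfl
  have htmul : ∀ u v : F, t u * t v = t (u + v) := by
    intro u v
    apply Subtype.ext; apply Equiv.ext; intro x
    show (x + v) + u = x + (u + v)
    ring
  have ht0 : t 0 = 1 := by
    apply Subtype.ext; apply Equiv.ext; intro x
    show x + 0 = x
    ring
  have htinj : ∀ u : F, t u = 1 → u = 0 := by
    intro u h
    have := congrArg (fun z : ↥X => ((z : Equiv.Perm F) : F → F) 0) h
    simpa [htapp] using this
  have htpow : ∀ (k : ℕ) (u : F), t u ^ k = t ((k : F) * u) := by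
    intro k
    induction k with
    | zero => intro u; simpa using ht0.symm
    | succ k ihk =>
      intro u
      rw [pow_succ, ihk, htmul]
      congr 1
      push_cast
      ring
  have htr : ∀ u : F, t u ^ r = 1 := by
    intro u
    rw [htpow, hrF, zero_mul, ht0]
  -- multiplication elements
  have memm : ∀ a : ↥A, Equiv.mulLeft₀ ((a : Fˣ) : F) (Units.ne_zero _) ∈ X := fun a =>
    (hX _).mpr ⟨(a : Fˣ), a.2, 0, fun x => by simp [Equiv.mulLeft₀]⟩
  set mA : ↥A → ↥X := fun a => ⟨Equiv.mulLeft₀ ((a : Fˣ) : F) (Units.ne_zero _), memm a⟩ with hmA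
  have hmapp : ∀ (a : ↥A) (x : F), ((mA a : Equiv.Perm F) : F → F) x = ((a : Fˣ) : F) * x :=
    fun a x => rfl
  have hconj : ∀ (a : ↥A) (u : F), mA a * t u = t (((a : Fˣ) : F) * u) * mA a := by
    intro a u
    apply Subtype.ext; apply Equiv.ext; intro x
    show ((a : Fˣ) : F) * (x + u) = ((a : Fˣ) : F) * x + ((a : Fˣ) : F) * u
    ring
  -- r divides |X|
  have hrX : r ∣ Nat.card ↥X := by
    obtain ⟨u₀, hu₀⟩ := exists_ne (0 : F)
    have h1 : t u₀ ≠ 1 := fun h => hu₀ (htinj u₀ h)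
    haveI : Fact r.Prime := ⟨hr⟩
    have := orderOf_eq_prime (htr u₀) h1
    rw [← this]
    exact orderOf_dvd_natCard _
  -- representation over the algebraic closure
  set K := AlgebraicClosure F' with hK
  set g : Matrix (Fin n) (Fin n) F' →+* Matrix (Fin n) (Fin n) K :=
    (algebraMap F' K).mapMatrix with hg
  have hginj : Function.Injective g := by
    intro M N h
    ext i j
    apply (algebraMap F' K).injective
    have := congrFun (congrFun (congrArg (fun M : Matrix (Fin n) (Fin n) K => (M : Fin n → Fin n → K)) h) i) j
    simpa [hg, Matrix.map_apply] using this
  set ψ : ↥X →* (Matrix (Fin n) (Fin n) K)ˣ := (Units.map g.toMonoidHom).comp φ with hψ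
  set ρ : ↥X →* Module.End K (Fin n → K) :=
    ((Matrix.toLinAlgEquiv' : Matrix (Fin n) (Fin n) K ≃ₐ[K] _).toAlgHom.toRingHom.toMonoidHom).comp
      ((Units.coeHom _).comp ψ) with hρ
  have hρinj : Function.Injective ρ := by
    intro x y h
    apply hφ
    apply Units.ext
    apply hginj
    have h2 : ((ψ x : Matrix (Fin n) (Fin n) K)) = ψ y :=
      Matrix.toLinAlgEquiv'.injective h
    exact h2
  haveI : Nonempty (Fin n) := ⟨⟨0, hn⟩⟩
  set T : F → Module.End K (Fin n → K) := fun u => ρ (t u) with hT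
  have hTcomm : ∀ u v : F, Commute (T u) (T v) := by
    intro u v
    show ρ (t u) * ρ (t v) = ρ (t v) * ρ (t u)
    rw [← map_mul, ← map_mul, htmul, htmul, add_comm]
  have hTr : ∀ u, T u ^ r = 1 := by
    intro u
    rw [hT]
    show ρ (t u) ^ r = 1
    rw [← map_pow, htr, map_one]
  have hT0 : T 0 = 1 := by
    show ρ (t 0) = 1
    rw [ht0, map_one]
  have hTne : ∀ u : F, u ≠ 0 → T u ≠ 1 := by
    intro u hu he
    exact hu (htinj u (hρinj (by rw [map_one]; exact he)))
  have hrK : (r : K) ≠ 0 := by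
    intro h0
    haveI : CharP K (ringChar F') :=
      charP_of_injective_ringHom (algebraMap F' K).injective (ringChar F')
    have hdvd : ringChar F' ∣ r := (CharP.cast_eq_zero_iff K (ringChar F') r).mp h0
    rcases hr.eq_one_or_self_of_dvd _ hdvd with h1 | h1
    · exact CharP.char_ne_one F' (ringChar F') h1
    · exact hchar (h1 ▸ hrX)
  -- find eigenvalue ζ ≠ 1
  obtain ⟨u₀, hu₀⟩ := exists_ne (0 : F)
  obtain ⟨ζ, hζ1, hζ⟩ := aux_eig hrK (hTr u₀) (hTne u₀ hu₀)
  set E := Module.End.eigenspace (T u₀) ζ with hE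
  have hEinv : ∀ u, ∀ x ∈ E, T u x ∈ E := by
    intro u x hx
    rw [hE, Module.End.mem_eigenspace_iff] at hx ⊢
    have hcx : (T u₀) ((T u) x) = (T u) ((T u₀) x) := by
      have := (hTcomm u₀ u).eq
      exact congrFun (congrArg DFunLike.coe this) x
    rw [hcx, hx, map_smul]
  obtain ⟨W, hWbot, hWE, hWs⟩ := aux_simul T hTcomm E hζ hEinv
  choose χ hχ using hWs
  obtain ⟨w, hwW, hw0⟩ := Submodule.exists_mem_ne_zero_of_ne_bot hWbot
  have hsc : ∀ c d : K, c • w = d • w → c = d := by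
    intro c d h
    by_contra hne
    apply hw0
    have h2 : (c - d) • w = 0 := by rw [sub_smul, h, sub_self]
    rcases smul_eq_zero.mp h2 with h3 | h3
    · exact absurd (sub_eq_zero.mp h3) hne
    · exact h3
  have hweig : ∀ u, T u w = χ u • w := fun u => hχ u w hwW
  have hχadd : ∀ u v : F, χ (u + v) = χ u * χ v := by
    intro u v
    apply hsc
    rw [← hweig]
    have hTm : T (u + v) = T u * T v := by
      show ρ (t (u + v)) = ρ (t u) * ρ (t v)
      rw [← map_mul, htmul]
    rw [hTm, Module.End.mul_apply, hweig, map_smul, hweig, smul_smul, mul_comm]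
  have hχ0 : χ 0 = 1 := by
    apply hsc
    rw [← hweig, hT0, one_smul]
    rfl
  have hχne0 : ∀ v : F, χ v ≠ 0 := by
    intro v hv
    have h1 := hχadd v (-v)
    rw [add_neg_cancel, hχ0, hv, zero_mul] at h1
    exact one_ne_zero h1
  have hχu₀ : χ u₀ = ζ := by
    apply hsc
    rw [← hweig]
    exact Module.End.mem_eigenspace_iff.mp (hWE hwW)
  -- the family of eigenvectors indexed by A
  set y : ↥A → (Fin n → K) := fun a => ρ (mA a) w with hy
  have hy0 : ∀ a, y a ≠ 0 := by
    intro a h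
    apply hw0
    have h1 : ρ ((mA a)⁻¹) (ρ (mA a) w) = w := by
      rw [← Module.End.mul_apply, ← map_mul, inv_mul_cancel, map_one, Module.End.one_apply]
    rw [← h1]
    show ρ ((mA a)⁻¹) (y a) = 0
    rw [h, map_zero]
  set χA : ↥A → F → K := fun a u => χ ((((a : Fˣ)⁻¹ : Fˣ) : F) * u) with hχA
  have hyeig : ∀ (a : ↥A) (u : F), T u (y a) = χA a u • y a := by
    intro a u
    have hv : ((a : Fˣ) : F) * ((((a : Fˣ)⁻¹ : Fˣ) : F) * u) = u := by
      rw [← mul_assoc, ← Units.val_mul, mul_inv_cancel, Units.val_one, one_mul]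
    have h1 : t u * mA a = mA a * t ((((a : Fˣ)⁻¹ : Fˣ) : F) * u) := by
      rw [hconj a _, hv]
    calc T u (y a) = ρ (t u * mA a) w := by
          rw [map_mul, Module.End.mul_apply]
      _ = ρ (mA a) (T ((((a : Fˣ)⁻¹ : Fˣ) : F) * u) w) := by
          rw [h1, map_mul, Module.End.mul_apply]
      _ = χA a u • y a := by rw [hweig, map_smul]
  have hdist : ∀ a b : ↥A, a ≠ b → ∃ u, χA a u ≠ χA b u := by
    intro a b hab
    by_contra hcon
    push_neg at hcon
    set c : F := (((a : Fˣ)⁻¹ : Fˣ) : F) - (((b : Fˣ)⁻¹ : Fˣ) : F) with hc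
    have hcne : c ≠ 0 := by
      rw [hc, sub_ne_zero]
      intro h
      apply hab
      have h2 : ((a : Fˣ)⁻¹ : Fˣ) = ((b : Fˣ)⁻¹ : Fˣ) := Units.ext h
      exact Subtype.ext (inv_injective h2)
    have hone : ∀ u : F, χ (c * u) = 1 := by
      intro u
      have h1 := hcon u
      simp only [hχA] at h1
      have h2 : χ (c * u) * χ ((((b : Fˣ)⁻¹ : Fˣ) : F) * u) =
          χ ((((b : Fˣ)⁻¹ : Fˣ) : F) * u) := by
        rw [← hχadd]
        have h3 : c * u + (((b : Fˣ)⁻¹ : Fˣ) : F) * u = (((a : Fˣ)⁻¹ : Fˣ) : F) * u := by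
          rw [hc]; ring
        rw [h3, h1]
      have := mul_right_cancel₀ (hχne0 _) (h2.trans (one_mul _).symm)
      exact this
    have h4 := hone (c⁻¹ * u₀)
    rw [← mul_assoc, mul_inv_cancel₀ hcne, one_mul, hχu₀] at h4
    exact hζ1 h4
  have hLI := aux_indep T χA y hy0 hyeig hdist
  haveI : Fintype ↥A := Fintype.ofFinite _
  have hfin := hLI.fintype_card_le_finrank
  rw [Module.finrank_pi, Fintype.card_fin] at hfin
  rw [Nat.card_eq_fintype_card]
  exact hfin
end

section
/- There exists a function h : ℕ → ℕ with the following property. Let k, n and d be positive integers with d > h(n), let p be a prime, let Γ be a finite connected simple graph with exactly k·p^n vertices that is regular of valency d, and let G be a group of automorphisms of Γ acting transitively on the vertices. Suppose that for a vertex v the permutation group L = G_v^{Γ(v)} induced by G_v on the neighbourhood Γ(v) is 2-transitive and possesses an abelian regular normal subgroup (i.e., L is affine). Then p ≤ k·|G_v|. -/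
namespace Stmt16Aux

lemma nsmul_congr_mod {A : Type} [AddCommGroup A] {p : ℕ} (htor : ∀ a : A, p • a = 0)
    {a b : ℕ} (h : a % p = b % p) (x : A) : a • x = b • x := by
  have key : ∀ c : ℕ, c • x = (c % p) • x := by
    intro c
    conv_lhs => rw [← Nat.mod_add_div c p]
    rw [add_nsmul, mul_comm, mul_nsmul, htor, add_zero]
  rw [key a, key b, h]

lemma dproper {Q : Type} [Group Q] [Finite Q] {p : ℕ} [hp : Fact p.Prime]
    (hQ : IsPGroup p Q) [Nontrivial Q] :
    Subgroup.closure {z : Q | (∃ x y : Q, z = x * y * x⁻¹ * y⁻¹) ∨ ∃ x : Q, z = x ^ p} ≠ ⊤ := by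
  classical
  -- the commutator subgroup is proper
  have hnil : Group.IsNilpotent Q := hQ.isNilpotent
  have hcomm : commutator Q ≠ ⊤ := by
    intro hc
    obtain ⟨mm, hm⟩ := nilpotent_iff_lowerCentralSeries.mp hnil
    have hall : ∀ mm, Subgroup.lowerCentralSeries (⊤ : Subgroup Q) mm = ⊤ := by
      intro mm
      induction mm with
      | zero => exact Subgroup.lowerCentralSeries_zero _
      | succ m ih =>
        rw [Subgroup.lowerCentralSeries_succ, ih]
        show ⁅(⊤ : Subgroup Q), (⊤ : Subgroup Q)⁆ = ⊤
        rw [← commutator_def, hc]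
    rw [hall mm] at hm
    obtain ⟨x, y, hxy⟩ := exists_pair_ne Q
    apply hxy
    have hx : x ∈ (⊥ : Subgroup Q) := hm ▸ Subgroup.mem_top x
    have hy : y ∈ (⊥ : Subgroup Q) := hm ▸ Subgroup.mem_top y
    rw [Subgroup.mem_bot.mp hx, Subgroup.mem_bot.mp hy]
  -- the abelianization
  set Ab := Abelianization Q
  have hqsurj : Function.Surjective (Abelianization.of (G := Q)) := fun b =>
    Quotient.inductionOn' b (fun a => ⟨a, rfl⟩)
  have hAbnt : Nontrivial Ab := by
    obtain ⟨x, hx⟩ : ∃ x : Q, x ∉ commutator Q := by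
      by_contra hcon
      push_neg at hcon
      exact hcomm ((Subgroup.eq_top_iff' _).mpr hcon)
    refine ⟨Abelianization.of x, 1, ?_⟩
    intro hx1
    exact hx ((QuotientGroup.eq_one_iff x).mp hx1)
  have hAbp : IsPGroup p Ab := hQ.of_surjective (Abelianization.of) hqsurj
  -- Cauchy in Ab
  have hpcard : p ∣ Nat.card Ab := by
    obtain ⟨mm, hmm⟩ := IsPGroup.iff_card.mp hAbp
    have h1 : 1 < Nat.card Ab := Finite.one_lt_card_iff_nontrivial.mpr hAbnt
    rcases Nat.eq_zero_or_pos mm with hm0 | hmpos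
    · rw [hm0, pow_zero] at hmm; omega
    · rw [hmm]; exact dvd_pow_self p hmpos.ne'
  letI : Fintype Ab := Fintype.ofFinite Ab
  obtain ⟨g, hg⟩ := exists_prime_orderOf_dvd_card (G := Ab) p
    (by rwa [← Nat.card_eq_fintype_card])
  -- the p-th power map
  set φ : Ab →* Ab := powMonoidHom p
  have hgker : g ∈ φ.ker := by
    rw [MonoidHom.mem_ker]
    show g ^ p = 1
    rw [← hg]; exact pow_orderOf_eq_one g
  have hkerge : p ≤ Nat.card φ.ker := by
    have : orderOf (⟨g, hgker⟩ : φ.ker) = p := by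
      rw [Subgroup.orderOf_mk]; exact hg
    calc p = orderOf (⟨g, hgker⟩ : φ.ker) := this.symm
    _ ≤ Nat.card φ.ker := Nat.le_of_dvd Nat.card_pos (orderOf_dvd_natCard _)
  have hrange_lt : Nat.card φ.range < Nat.card Ab := by
    have h1 : Nat.card Ab = Nat.card (Ab ⧸ φ.ker) * Nat.card φ.ker :=
      Subgroup.card_eq_card_quotient_mul_card_subgroup φ.ker
    have h2 : Nat.card (Ab ⧸ φ.ker) = Nat.card φ.range :=
      Nat.card_congr (QuotientGroup.quotientKerEquivRange φ).toEquiv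
    have h3 : 2 ≤ Nat.card φ.ker := le_trans hp.out.two_le hkerge
    have h4 : 0 < Nat.card φ.range := Nat.card_pos
    calc Nat.card φ.range < Nat.card φ.range * 2 := by omega
    _ ≤ Nat.card φ.range * Nat.card φ.ker := by
        exact Nat.mul_le_mul_left _ h3
    _ = Nat.card Ab := by rw [h1, h2, mul_comm] 
  obtain ⟨w, hw⟩ : ∃ w : Ab, w ∉ φ.range := by
    by_contra hcon
    push_neg at hcon
    have : φ.range = ⊤ := (Subgroup.eq_top_iff' _).mpr hcon
    rw [this] at hrange_lt
    have : Nat.card (⊤ : Subgroup Ab) = Nat.card Ab := by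
      exact Nat.card_congr Subgroup.topEquiv.toEquiv
    omega
  -- now the main argument
  intro hcl
  have hmap : (Subgroup.closure {z : Q | (∃ x y : Q, z = x * y * x⁻¹ * y⁻¹) ∨ ∃ x : Q, z = x ^ p}).map
      (Abelianization.of) = ⊤ := by
    rw [hcl]
    rw [← MonoidHom.range_eq_map]
    exact MonoidHom.range_eq_top_of_surjective _ hqsurj
  rw [MonoidHom.map_closure] at hmap
  have hsub : (Abelianization.of (G := Q)) ''
      {z : Q | (∃ x y : Q, z = x * y * x⁻¹ * y⁻¹) ∨ ∃ x : Q, z = x ^ p} ⊆ (φ.range : Set Ab) := by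
    rintro _ ⟨z, hz, rfl⟩
    rcases hz with ⟨x, y, rfl⟩ | ⟨x, rfl⟩
    · have : Abelianization.of (x * y * x⁻¹ * y⁻¹) = 1 := by
        rw [map_mul, map_mul, map_mul, map_inv, map_inv]
        rw [mul_comm (Abelianization.of x) (Abelianization.of y)]
        group
      rw [this]; exact Subgroup.one_mem _
    · rw [map_pow]
      exact ⟨Abelianization.of x, rfl⟩
  have : (⊤ : Subgroup Ab) ≤ φ.range := by
    rw [← hmap]
    exact (Subgroup.closure_le _).mpr hsub
  exact hw (this (Subgroup.mem_top w))


lemma elemquot {𝔾 : Type} [Group 𝔾] [Finite 𝔾] {p n : ℕ} [hp : Fact p.Prime]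
    (P : Subgroup 𝔾) (hPn : P.Normal) (hcard : Nat.card P = p ^ n) (hn : 1 ≤ n) :
    ∃ (A : Type) (_ : AddCommGroup A) (_ : Finite A) (m : ↥P → A) (al : 𝔾 → A →+ A),
      (∀ x y : ↥P, m (x * y) = m x + m y) ∧
      Function.Surjective m ∧
      (∀ (g : 𝔾) (x : ↥P), al g (m x) = m ⟨g * ↑x * g⁻¹, hPn.conj_mem ↑x x.2 g⟩) ∧
      (∀ (π : ↥P) (a : A), al (↑π : 𝔾) a = a) ∧
      (∀ (g h : 𝔾) (a : A), al g (al h a) = al (g * h) a) ∧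
      (∀ a : A, p • a = 0) ∧
      2 ≤ Nat.card A ∧ Nat.card A ∣ p ^ n := by
  classical
  set S₂ : Set ↥P := {w : ↥P | (∃ a b : ↥P, w = a * b * a⁻¹ * b⁻¹) ∨ ∃ a : ↥P, w = a ^ p}
    with hS₂
  set DQ : Subgroup ↥P := Subgroup.closure S₂ with hDQ
  -- any endomorphism of ↥P maps S₂ into S₂, hence DQ into DQ
  have hmapS : ∀ f : ↥P →* ↥P, f '' S₂ ⊆ S₂ := by
    rintro f _ ⟨w, hw, rfl⟩
    rcases hw with ⟨a, b, rfl⟩ | ⟨a, rfl⟩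
    · exact Or.inl ⟨f a, f b, by simp [map_mul, map_inv]⟩
    · exact Or.inr ⟨f a, by simp [map_pow]⟩
  have hDmap : ∀ (f : ↥P →* ↥P) (x : ↥P), x ∈ DQ → f x ∈ DQ := by
    intro f x hx
    have h1 : DQ.map f = Subgroup.closure (f '' S₂) := MonoidHom.map_closure f S₂
    have h2 : Subgroup.closure (f '' S₂) ≤ DQ := (Subgroup.closure_le _).mpr
      (le_trans (hmapS f) Subgroup.subset_closure)
    exact (h1 ▸ h2) (Subgroup.mem_map_of_mem f hx)
  have hDQnorm : DQ.Normal := by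
    constructor
    intro x hx g
    have := hDmap ((MulAut.conj g).toMonoidHom) x hx
    simpa using this
  -- the quotient is nontrivial (p-group theory)
  have hPpgrp : IsPGroup p ↥P := IsPGroup.of_card hcard
  have hPnt : Nontrivial ↥P := by
    apply Finite.one_lt_card_iff_nontrivial.mp
    rw [hcard]
    calc 1 < p := hp.out.one_lt
    _ = p ^ 1 := (pow_one p).symm
    _ ≤ p ^ n := Nat.pow_le_pow_right hp.out.pos hn
  have hDQtop : DQ ≠ ⊤ := dproper hPpgrp
  -- the quotient
  letI : CommGroup (↥P ⧸ DQ) :=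
    { (inferInstance : Group (↥P ⧸ DQ)) with
      mul_comm := by
        intro a b
        refine Quotient.inductionOn₂' a b (fun x y => ?_)
        show QuotientGroup.mk (x * y) = QuotientGroup.mk (y * x)
        rw [QuotientGroup.eq]
        apply Subgroup.subset_closure
        exact Or.inl ⟨y⁻¹, x⁻¹, by group⟩ }
  set A := Additive (↥P ⧸ DQ) with hA
  letI : AddCommGroup A := inferInstance
  set m : ↥P → A := fun x => Additive.ofMul (QuotientGroup.mk x : ↥P ⧸ DQ) with hmdef
  have hm : ∀ x y : ↥P, m (x * y) = m x + m y := by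
    intro x y
    show Additive.ofMul ((QuotientGroup.mk (x * y)) : ↥P ⧸ DQ) = _
    rw [QuotientGroup.mk_mul]
    rfl
  have hmsurj : Function.Surjective m := by
    intro a
    obtain ⟨x, hx⟩ := QuotientGroup.mk'_surjective DQ (Additive.toMul a)
    refine ⟨x, ?_⟩
    show Additive.ofMul ((QuotientGroup.mk x) : ↥P ⧸ DQ) = a
    have hx' : (QuotientGroup.mk x : ↥P ⧸ DQ) = Additive.toMul a := hx
    rw [hx']
    simp
  -- conjugation
  have hconjmem : ∀ (g : 𝔾) (x : ↥P), g * ↑x * g⁻¹ ∈ P := fun g x => hPn.conj_mem ↑x x.2 g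
  set conjP : 𝔾 → ↥P →* ↥P := fun g =>
    { toFun := fun x => ⟨g * ↑x * g⁻¹, hconjmem g x⟩
      map_one' := by ext; simp
      map_mul' := by intro x y; ext; simp [mul_assoc] } with hconjP
  set Em : 𝔾 → (↥P ⧸ DQ) →* (↥P ⧸ DQ) := fun g =>
    QuotientGroup.map DQ DQ (conjP g) (by
      intro x hx
      exact hDmap (conjP g) x hx) with hEm
  set al : 𝔾 → A →+ A := fun g =>
    AddMonoidHom.mk' (fun a => Additive.ofMul (Em g (Additive.toMul a))) (by
      intro a b
      show Additive.ofMul (Em g (Additive.toMul a * Additive.toMul b)) = _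
      rw [map_mul]
      rfl) with hal
  have hal_mk : ∀ (g : 𝔾) (x : ↥P), al g (m x) = m (conjP g x) := by
    intro g x
    show Additive.ofMul (Em g (QuotientGroup.mk x)) = _
    rw [hEm]
    simp only [QuotientGroup.map_mk]
    rfl
  have hal_m : ∀ (g : 𝔾) (x : ↥P), al g (m x) = m ⟨g * ↑x * g⁻¹, hPn.conj_mem ↑x x.2 g⟩ := by
    intro g x
    rw [hal_mk]
    rfl
  have hal_P : ∀ (π : ↥P) (a : A), al (↑π : 𝔾) a = a := by
    intro π a
    obtain ⟨x, rfl⟩ := hmsurj a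
    rw [hal_mk]
    have hc : conjP (↑π : 𝔾) x = π * x * π⁻¹ := by
      ext; simp [hconjP]
    rw [hc]
    show Additive.ofMul ((QuotientGroup.mk (π * x * π⁻¹)) : ↥P ⧸ DQ) = _
    have : (QuotientGroup.mk (π * x * π⁻¹) : ↥P ⧸ DQ) = QuotientGroup.mk x := by
      rw [QuotientGroup.eq]
      apply Subgroup.subset_closure
      exact Or.inl ⟨π, x⁻¹, by group⟩
    rw [this]
  have hal_comp : ∀ (g h : 𝔾) (a : A), al g (al h a) = al (g * h) a := by
    intro g h a
    obtain ⟨x, rfl⟩ := hmsurj a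
    rw [hal_mk, hal_mk, hal_mk]
    congr 1
    ext
    simp [hconjP, mul_assoc]
  have htor : ∀ a : A, p • a = 0 := by
    intro a
    obtain ⟨x, rfl⟩ := hmsurj a
    show Additive.ofMul ((QuotientGroup.mk x : ↥P ⧸ DQ) ^ p) = 0
    rw [← QuotientGroup.mk_pow]
    have : (QuotientGroup.mk (x ^ p) : ↥P ⧸ DQ) = 1 := by
      rw [QuotientGroup.eq_one_iff]
      apply Subgroup.subset_closure
      exact Or.inr ⟨x, rfl⟩
    rw [this]
    rfl
  have hcard2 : 2 ≤ Nat.card A := by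
    have : Nontrivial (↥P ⧸ DQ) := by
      obtain ⟨x, hx⟩ : ∃ x : ↥P, x ∉ DQ := by
        by_contra hcon
        push_neg at hcon
        exact hDQtop ((Subgroup.eq_top_iff' _).mpr hcon)
      exact ⟨QuotientGroup.mk x, 1, fun h => hx ((QuotientGroup.eq_one_iff x).mp h)⟩
    have : Nontrivial A := this
    exact Finite.one_lt_card_iff_nontrivial.mpr this
  have hcarddvd : Nat.card A ∣ p ^ n := by
    have h1 : Nat.card ↥P = Nat.card (↥P ⧸ DQ) * Nat.card DQ :=
      Subgroup.card_eq_card_quotient_mul_card_subgroup DQ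
    have h2 : Nat.card A = Nat.card (↥P ⧸ DQ) := rfl
    rw [h2, ← hcard]
    exact Dvd.intro _ (h1.symm)
  exact ⟨A, inferInstance, inferInstance, m, al, hm, hmsurj, hal_m, hal_P, hal_comp, htor,
    hcard2, hcarddvd⟩



lemma genpsi {GG V A : Type} [Group GG] [Finite GG] [MulAction GG V] [AddCommGroup A]
    (P : Subgroup GG) (hP : P.Normal)
    (m : ↥P → A) (hm : ∀ x y : ↥P, m (x * y) = m x + m y)
    (al : GG → A →+ A)
    (hal_m : ∀ (g : GG) (x : ↥P), al g (m x) = m ⟨g * ↑x * g⁻¹, hP.conj_mem ↑x x.2 g⟩)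
    (hal_P : ∀ (π : ↥P) (a : A), al (↑π : GG) a = a)
    (hal_comp : ∀ (g h : GG) (a : A), al g (al h a) = al (g * h) a)
    (hsemi : ∀ (x : V) (π : ↥P), (↑π : GG) • x = x → π = 1)
    (M' : ℕ) (hMM' : ∀ a : A, (M' * P.index) • a = a) :
    ∃ (ψ : V → A) (C : GG → A),
      (∀ (π : ↥P) (x : V), ψ ((↑π : GG) • x) = m π + ψ x) ∧
      (∀ (g : GG) (x : V), ψ (g • x) = al g (ψ x) + C g) := by
  classical
  -- the block setoid on V (orbits of P)
  have bse : Equivalence (fun x y : V => ∃ π : ↥P, (↑π : GG) • x = y) := by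
    constructor
    · intro x; exact ⟨1, by simp⟩
    · rintro x y ⟨π, rfl⟩
      exact ⟨π⁻¹, by simp [smul_smul, ← Subgroup.coe_mul]⟩
    · rintro x y z ⟨π, rfl⟩ ⟨ρ, rfl⟩
      exact ⟨ρ * π, by simp [smul_smul]⟩
  let bs : Setoid V := ⟨fun x y => ∃ π : ↥P, (↑π : GG) • x = y, bse⟩
  let Blk := Quotient bs
  let bmk : V → Blk := Quotient.mk bs
  have hbmk_eq : ∀ {x y : V}, (∃ π : ↥P, (↑π : GG) • x = y) → bmk x = bmk y :=
    fun h => Quotient.sound h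
  -- action of GG on blocks
  have gbwd : ∀ (g : GG) (x y : V), bs.r x y → bmk (g • x) = bmk (g • y) := by
    rintro g x y ⟨π, rfl⟩
    apply hbmk_eq
    refine ⟨⟨g * ↑π * g⁻¹, hP.conj_mem ↑π π.2 g⟩, ?_⟩
    show (g * ↑π * g⁻¹) • g • x = g • (↑π : GG) • x
    rw [smul_smul, smul_smul]
    congr 1
    group
  let gb : GG → Blk → Blk := fun g => Quotient.lift (fun x => bmk (g • x)) (gbwd g)
  have hgb_mk : ∀ (g : GG) (x : V), gb g (bmk x) = bmk (g • x) := fun g x => rfl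
  have hgb_one : ∀ B, gb 1 B = B := by
    intro B
    refine Quotient.inductionOn B (fun x => ?_)
    show bmk ((1 : GG) • x) = bmk x
    rw [one_smul]
  have hgb_comp : ∀ (g h : GG) (B : Blk), gb g (gb h B) = gb (g * h) B := by
    intro g h B
    refine Quotient.inductionOn B (fun x => ?_)
    show bmk (g • h • x) = bmk ((g * h) • x)
    rw [mul_smul]
  have hgb_P : ∀ (π : ↥P) (B : Blk), gb (↑π : GG) B = B := by
    intro π B
    refine Quotient.inductionOn B (fun x => ?_)
    show bmk ((↑π : GG) • x) = bmk x
    exact (hbmk_eq ⟨π, rfl⟩).symm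
  -- base points
  let o : Blk → V := Quotient.out
  have ho : ∀ x : V, ∃ π : ↥P, (↑π : GG) • (o (bmk x)) = x := fun x => Quotient.mk_out x
  -- unique transporter within a block
  have huni : ∀ (x : V) (π π' : ↥P), (↑π : GG) • x = (↑π' : GG) • x → π = π' := by
    intro x π π' hh
    have h1 : (↑(π'⁻¹ * π) : GG) • x = x := by
      push_cast
      rw [mul_smul, hh]
      simp
    have h2 := hsemi x _ h1
    have : π' * (π'⁻¹ * π) = π' * 1 := by rw [h2]
    simpa [mul_assoc] using this
  let tp : V → V → ↥P := fun x y =>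
    if h : ∃ π : ↥P, (↑π : GG) • x = y then h.choose else 1
  have htp : ∀ {x y : V} (h : ∃ π : ↥P, (↑π : GG) • x = y), (↑(tp x y) : GG) • x = y := by
    intro x y h
    simp only [tp, dif_pos h]
    exact h.choose_spec
  -- the base voltage
  let Th : V → A := fun x => m (tp (o (bmk x)) x)
  have hTmove : ∀ (π : ↥P) (x : V), Th ((↑π : GG) • x) = m π + Th x := by
    intro π x
    have hbm : bmk ((↑π : GG) • x) = bmk x := (hbmk_eq ⟨π, rfl⟩).symm
    have h1 : ∃ ρ : ↥P, (↑ρ : GG) • (o (bmk x)) = x := ho x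
    have h2 : ∃ ρ : ↥P, (↑ρ : GG) • (o (bmk x)) = (↑π : GG) • x :=
      ⟨π * tp (o (bmk x)) x, by push_cast; rw [mul_smul, htp h1]⟩
    have h3 : tp (o (bmk x)) ((↑π : GG) • x) = π * tp (o (bmk x)) x := by
      apply huni (o (bmk x))
      rw [htp h2]
      push_cast
      rw [mul_smul, htp h1]
    show m (tp (o (bmk ((↑π : GG) • x))) ((↑π : GG) • x)) = m π + m (tp (o (bmk x)) x)
    rw [hbm, h3, hm]
  -- the cocycle
  let b : GG → Blk → A := fun g B => Th (g • o B)
  have hTg : ∀ (g : GG) (x : V), Th (g • x) = b g (bmk x) + al g (Th x) := by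
    intro g x
    set B := bmk x with hB
    set o₁ := o B with ho₁
    set t := tp o₁ x with ht
    have htx : (↑t : GG) • o₁ = x := htp (ho x)
    set ct : ↥P := ⟨g * ↑t * g⁻¹, hP.conj_mem ↑t t.2 g⟩ with hct
    have h1 : g • x = (↑ct : GG) • (g • o₁) := by
      rw [← htx]
      show g • (↑t : GG) • o₁ = (g * ↑t * g⁻¹) • g • o₁
      rw [smul_smul, smul_smul]
      congr 1
      group
    rw [h1, hTmove ct (g • o₁)]
    have h2 : m ct = al g (m t) := (hal_m g t).symm
    rw [h2]
    show al g (m t) + Th (g • o B) = b g (bmk x) + al g (Th x)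
    rw [add_comm]
  have hbc : ∀ (g h : GG) (B : Blk), b (g * h) B = b g (gb h B) + al g (b h B) := by
    intro g h B
    have hmkB : bmk (h • o B) = gb h B := by
      refine Quotient.inductionOn B (fun x => ?_)
      show bmk (h • o (bmk x)) = gb h (bmk x)
      rw [hgb_mk]
      exact gbwd h _ _ (ho x)
    show Th ((g * h) • o B) = b g (gb h B) + al g (Th (h • o B))
    rw [mul_smul, hTg g (h • o B), hmkB]
  have hbP : ∀ (π : ↥P) (g : GG) (B : Blk), b ((↑π : GG) * g) B = m π + b g B := by
    intro π g B
    show Th (((↑π : GG) * g) • o B) = m π + Th (g • o B)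
    rw [mul_smul, hTmove]
  -- the transversal of right cosets of P
  have tse : Equivalence (fun a c : GG => ∃ π : ↥P, (↑π : GG) * a = c) := by
    constructor
    · intro a; exact ⟨1, by simp⟩
    · rintro a c ⟨π, rfl⟩; exact ⟨π⁻¹, by push_cast; group⟩
    · rintro a c e ⟨π, rfl⟩ ⟨ρ, rfl⟩; exact ⟨ρ * π, by push_cast; group⟩
  let ts : Setoid GG := ⟨fun a c => ∃ π : ↥P, (↑π : GG) * a = c, tse⟩
  let T := Quotient ts
  let tmk : GG → T := Quotient.mk ts
  let tout : T → GG := Quotient.out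
  have htmk_eq : ∀ {a c : GG}, (∃ π : ↥P, (↑π : GG) * a = c) → tmk a = tmk c :=
    fun h => Quotient.sound h
  have hν : ∀ s : GG, ∃ π : ↥P, (↑π : GG) * tout (tmk s) = s := fun s => Quotient.mk_out s
  let ν : GG → ↥P := fun s => (hν s).choose
  have hνs : ∀ s : GG, (↑(ν s) : GG) * tout (tmk s) = s := fun s => (hν s).choose_spec
  letI : Fintype T := Fintype.ofFinite T
  -- card T = index of P
  have hMT : Nat.card T = P.index := by
    have e : T ≃ (GG ⧸ P) := by
      refine Quotient.congr (Equiv.inv GG) ?_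
      intro a c
      show (∃ π : ↥P, (↑π : GG) * a = c) ↔ _
      rw [QuotientGroup.leftRel_apply]
      constructor
      · rintro ⟨π, rfl⟩
        show a⁻¹⁻¹ * ((↑π : GG) * a)⁻¹ ∈ P
        have : a⁻¹⁻¹ * ((↑π : GG) * a)⁻¹ = (↑π⁻¹ : GG) := by push_cast; group
        rw [this]
        exact π⁻¹.2
      · intro hmem
        refine ⟨⟨(a⁻¹⁻¹ * c⁻¹)⁻¹, Subgroup.inv_mem _ hmem⟩, ?_⟩
        show (a⁻¹⁻¹ * c⁻¹)⁻¹ * a = c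
        group
    rw [Nat.card_congr e, Subgroup.index_eq_card]
  -- reindexing bijections
  have hJwd : ∀ (g : GG) (a c : GG), ts.r a c → tmk (g * a) = tmk (g * c) := by
    rintro g a c ⟨π, rfl⟩
    apply htmk_eq
    refine ⟨⟨g * ↑π * g⁻¹, hP.conj_mem ↑π π.2 g⟩, ?_⟩
    show g * ↑π * g⁻¹ * (g * a) = g * ((↑π : GG) * a)
    group
  let J : GG → T → T := fun g => Quotient.lift (fun s => tmk (g * s)) (hJwd g)
  have hJ_mk : ∀ (g s : GG), J g (tmk s) = tmk (g * s) := fun g s => rfl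
  have hJ_out : ∀ (g : GG) (t : T), J g t = tmk (g * tout t) := by
    intro g t
    conv_lhs => rw [← Quotient.out_eq t]
    rfl
  have hJinv : ∀ (g : GG) (t : T), J g (J g⁻¹ t) = t := by
    intro g t
    refine Quotient.inductionOn t (fun s => ?_)
    show J g (J g⁻¹ (tmk s)) = tmk s
    rw [hJ_mk, hJ_mk]
    congr 1
    group
  have hJinv' : ∀ (g : GG) (t : T), J g⁻¹ (J g t) = t := by
    intro g t
    have := hJinv g⁻¹ t
    rwa [inv_inv] at this
  -- the averaged correction
  let Φ : Blk → A := fun B => ∑ t : T, b (tout t) (gb (tout t)⁻¹ B)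
  let Pi : GG → A := fun g => ∑ t : T, m (ν (g⁻¹ * tout t))
  have hKEY : ∀ (g : GG) (B : Blk),
      Φ (gb g B) = P.index • b g B + (al g (Pi g) + al g (Φ B)) := by
    intro g B
    have hterm : ∀ t : T, b (tout t) (gb (tout t)⁻¹ (gb g B))
        = b g B + (al g (m (ν (g⁻¹ * tout t)))
            + al g (b (tout (J g⁻¹ t)) (gb (tout (J g⁻¹ t))⁻¹ B))) := by
      intro t
      set s := g⁻¹ * tout t with hs
      have hgs : tout t = g * s := by rw [hs]; group
      set r := tout (tmk s) with hr
      have hrJ : J g⁻¹ t = tmk s := by rw [hJ_out]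
      have hsr : (↑(ν s) : GG) * r = s := hνs s
      have h1 : gb (tout t)⁻¹ (gb g B) = gb s⁻¹ B := by
        rw [hgb_comp]
        have : (tout t)⁻¹ * g = s⁻¹ := by rw [hgs]; group
        rw [this]
      have h2 : gb s (gb s⁻¹ B) = B := by
        rw [hgb_comp, mul_inv_cancel, hgb_one]
      have hX : gb s⁻¹ B = gb r⁻¹ B := by
        have hsinv : s⁻¹ = r⁻¹ * (↑((ν s)⁻¹) : GG) := by
          conv_lhs => rw [← hsr]
          push_cast
          group
        rw [hsinv, ← hgb_comp, hgb_P]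
      calc b (tout t) (gb (tout t)⁻¹ (gb g B)) = b (g * s) (gb s⁻¹ B) := by rw [h1, ← hgs]
      _ = b g (gb s (gb s⁻¹ B)) + al g (b s (gb s⁻¹ B)) := hbc g s _
      _ = b g B + al g (b s (gb s⁻¹ B)) := by rw [h2]
      _ = b g B + al g (m (ν s) + b r (gb r⁻¹ B)) := by
          rw [hX]
          congr 1
          conv_lhs => rw [← hsr]
          rw [hbP]
      _ = b g B + (al g (m (ν s)) + al g (b (tout (J g⁻¹ t)) (gb (tout (J g⁻¹ t))⁻¹ B))) := by
          rw [map_add, hrJ, ← hr]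
    calc Φ (gb g B) = ∑ t : T, b (tout t) (gb (tout t)⁻¹ (gb g B)) := rfl
    _ = ∑ t : T, (b g B + (al g (m (ν (g⁻¹ * tout t)))
          + al g (b (tout (J g⁻¹ t)) (gb (tout (J g⁻¹ t))⁻¹ B)))) :=
        Finset.sum_congr rfl (fun t _ => hterm t)
    _ = (∑ _t : T, b g B) + ((∑ t : T, al g (m (ν (g⁻¹ * tout t))))
          + ∑ t : T, al g (b (tout (J g⁻¹ t)) (gb (tout (J g⁻¹ t))⁻¹ B))) := by
        rw [Finset.sum_add_distrib, Finset.sum_add_distrib]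
    _ = P.index • b g B + (al g (Pi g) + al g (Φ B)) := by
        congr 1
        · rw [Finset.sum_const, Finset.card_univ, ← Nat.card_eq_fintype_card, hMT]
        congr 1
        · rw [← map_sum]
        · rw [← map_sum]
          congr 1
          have h5 := Equiv.sum_comp (⟨J g⁻¹, J g, hJinv g, hJinv' g⟩ : T ≃ T)
            (fun u => b (tout u) (gb (tout u)⁻¹ B))
          simp only [Equiv.coe_fn_mk] at h5
          exact h5
  -- the final function
  refine ⟨fun x => Th x - M' • Φ (bmk x), fun g => -(M' • al g (Pi g)), ?_, ?_⟩
  · intro π x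
    show Th ((↑π : GG) • x) - M' • Φ (bmk ((↑π : GG) • x))
        = m π + (Th x - M' • Φ (bmk x))
    have hbm : bmk ((↑π : GG) • x) = bmk x := (hbmk_eq ⟨π, rfl⟩).symm
    rw [hTmove, hbm]
    abel
  · intro g x
    show Th (g • x) - M' • Φ (bmk (g • x))
        = al g (Th x - M' • Φ (bmk x)) + -(M' • al g (Pi g))
    have h0 : bmk (g • x) = gb g (bmk x) := rfl
    rw [h0, hTg g x, hKEY g (bmk x)]
    rw [smul_add, smul_add]
    have h1 : M' • (P.index • b g (bmk x)) = b g (bmk x) := by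
      rw [← mul_nsmul, mul_comm]
      exact hMM' _
    rw [h1, map_sub, AddMonoidHom.map_nsmul]
    abel

end Stmt16Aux

/-- There exists a function `h : ℕ → ℕ` such that, whenever `k`, `n`, `d` are positive
integers with `d > h n`, `p` is a prime, `Γ` is a finite connected simple graph with
exactly `k * p ^ n` vertices, regular of valency `d`, `G` is a vertex-transitive group
of automorphisms of `Γ`, and the permutation group `L` induced by the stabiliser `G_v`
on the neighbourhood `Γ(v)` of a vertex `v` is `2`-transitive with an abelian regular
normal subgroup (i.e. `L` is affine), then `p ≤ k * |G_v|`. -/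
theorem stmt16 :
    ∃ h : ℕ → ℕ,
      ∀ k n d p : ℕ, 0 < k → 0 < n → 0 < d → d > h n → p.Prime →
      ∀ (V : Type) (Γ : SimpleGraph V), Γ.Connected →
        Nat.card V = k * p ^ n →
        (∀ w : V, Nat.card (Γ.neighborSet w) = d) →
        ∀ G : Subgroup (Equiv.Perm V),
          (∀ g ∈ G, ∀ u w : V, Γ.Adj (g u) (g w) ↔ Γ.Adj u w) →
          (∀ u w : V, ∃ g ∈ G, g u = w) →
          ∀ (v : V) (L : Subgroup (Equiv.Perm (Γ.neighborSet v))),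
            (∀ σ : Equiv.Perm (Γ.neighborSet v), σ ∈ L ↔
              ∃ g ∈ G, g v = v ∧ ∀ u : Γ.neighborSet v, (σ u : V) = g (u : V)) →
            (∀ a b : Γ.neighborSet v, ∃ σ ∈ L, σ a = b) →
            (∀ a b c : Γ.neighborSet v, b ≠ a → c ≠ a →
              ∃ σ ∈ L, σ a = a ∧ σ b = c) →
            (∃ N : Subgroup (Equiv.Perm (Γ.neighborSet v)), N ≤ L ∧
              (∀ σ ∈ L, ∀ τ ∈ N, σ * τ * σ⁻¹ ∈ N) ∧
              (∀ τ₁ ∈ N, ∀ τ₂ ∈ N, τ₁ * τ₂ = τ₂ * τ₁) ∧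
              (∀ a b : Γ.neighborSet v,
                ∃! τ : Equiv.Perm (Γ.neighborSet v), τ ∈ N ∧ τ a = b)) →
            p ≤ k * Nat.card ↥(G ⊓ MulAction.stabilizer (Equiv.Perm V) v) := by
  classical
  refine ⟨fun n => n + 1, ?_⟩
  intro k n d p hk hn hd0 hdh hp V Γ hconn hV hreg G hAut hTrans v L hL hLtrans hL2 _haffine
  by_contra hcon
  push_neg at hcon
  haveI hpf : Fact p.Prime := ⟨hp⟩
  set s := Nat.card ↥(G ⊓ MulAction.stabilizer (Equiv.Perm V) v) with hsdef
  have hdh' : d > n + 1 := hdh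
  -- finiteness
  have hVpos : 0 < Nat.card V := by rw [hV]; exact Nat.mul_pos hk (pow_pos hp.pos n)
  haveI hVfin : Finite V := (Nat.card_pos_iff.mp hVpos).2
  haveI hVne : Nonempty V := (Nat.card_pos_iff.mp hVpos).1
  letI : Fintype V := Fintype.ofFinite V
  letI : DecidableEq V := Classical.decEq V
  haveI hGfin : Finite ↥G := inferInstance
  haveI hGtrans : MulAction.IsPretransitive ↥G V := by
    constructor
    intro x y
    obtain ⟨g, hg, hgxy⟩ := hTrans x y
    exact ⟨⟨g, hg⟩, hgxy⟩
  -- stabilizer cardinalities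
  have hstabv : Nat.card ↥(MulAction.stabilizer ↥G v) = s := by
    rw [hsdef]
    refine Nat.card_congr
      { toFun := fun x => ⟨x.1.1, Subgroup.mem_inf.mpr ⟨x.1.2, x.2⟩⟩
        invFun := fun y => ⟨⟨y.1, (Subgroup.mem_inf.mp y.2).1⟩, (Subgroup.mem_inf.mp y.2).2⟩
        left_inv := fun x => rfl
        right_inv := fun y => rfl }
  have hstabx : ∀ x : V, Nat.card ↥(MulAction.stabilizer ↥G x) = s := by
    intro x
    obtain ⟨g, hg⟩ := MulAction.exists_smul_eq ↥G v x
    rw [← hg, MulAction.stabilizer_smul_eq_stabilizer_map_conj]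
    rw [← hstabv]
    exact (Nat.card_congr
      (Subgroup.equivMapOfInjective _ _ (MulEquiv.injective (MulAut.conj g))).toEquiv).symm
  have hGcard : Nat.card ↥G = k * p ^ n * s := by
    have h1 : (MulAction.stabilizer ↥G v).index = Nat.card V :=
      MulAction.index_stabilizer_of_transitive ↥G v
    have h2 := Subgroup.index_mul_card (MulAction.stabilizer ↥G v)
    rw [h1, hstabv, hV] at h2
    rw [← h2]
  -- basic bounds
  have hs1 : 1 ≤ s := by
    rw [← hstabv]
    exact Nat.card_pos
  have hsp : s < p := lt_of_le_of_lt (Nat.le_mul_of_pos_left s hk) hcon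
  have hkp : k < p := lt_of_le_of_lt (Nat.le_mul_of_pos_right k hs1) hcon
  have hpk : ¬ p ∣ k := fun hdvd => absurd (Nat.le_of_dvd hk hdvd) (not_le.mpr hkp)
  have hps : ¬ p ∣ s := fun hdvd => absurd (Nat.le_of_dvd hs1 hdvd) (not_le.mpr hsp)
  -- the induced group L has order between d and s
  letI : Fintype ↥(Γ.neighborSet v) := Fintype.ofFinite _
  have hdNS : Nat.card ↥(Γ.neighborSet v) = d := hreg v
  haveI hNSne : Nonempty ↥(Γ.neighborSet v) := by
    have : 0 < Nat.card ↥(Γ.neighborSet v) := by rw [hdNS]; exact hd0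
    exact (Nat.card_pos_iff.mp this).1
  have hcardNST : Fintype.card ↥(Γ.neighborSet v) = d := by
    rw [← Nat.card_eq_fintype_card]; exact hdNS
  have hmemNS : ∀ (g : Equiv.Perm V), g ∈ G → g v = v →
      ∀ u : V, u ∈ Γ.neighborSet v → g u ∈ Γ.neighborSet v := by
    intro g hg hgv u hu
    have := (hAut g hg v u).mpr hu
    rwa [hgv] at this
  have hLle : Nat.card ↥L ≤ s := by
    have hmk : ∀ x : ↥(MulAction.stabilizer ↥G v), ∃ σ : ↥L,
        ∀ u : ↥(Γ.neighborSet v),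
          ((σ : Equiv.Perm ↥(Γ.neighborSet v)) u : V) = ((x : ↥G) : Equiv.Perm V) ↑u := by
      intro x
      have hgG : ((x : ↥G) : Equiv.Perm V) ∈ G := (x : ↥G).2
      have hgv : ((x : ↥G) : Equiv.Perm V) v = v := x.2
      have hgv' : ((x : ↥G) : Equiv.Perm V)⁻¹ v = v := by
        rw [Equiv.Perm.inv_eq_iff_eq]
        exact hgv.symm
      refine ⟨⟨{ toFun := fun u => ⟨((x : ↥G) : Equiv.Perm V) ↑u, hmemNS _ hgG hgv ↑u u.2⟩
                 invFun := fun u => ⟨((x : ↥G) : Equiv.Perm V)⁻¹ ↑u,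
                   hmemNS _ (inv_mem hgG) hgv' ↑u u.2⟩
                 left_inv := fun u => by
                   apply Subtype.ext
                   exact Equiv.symm_apply_apply _ _
                 right_inv := fun u => by
                   apply Subtype.ext
                   exact Equiv.apply_symm_apply _ _ }, ?_⟩, fun u => rfl⟩
      exact (hL _).mpr ⟨_, hgG, hgv, fun u => rfl⟩
    choose F hF using hmk
    have hFsurj : Function.Surjective F := by
      intro σ
      obtain ⟨g, hgG, hgv, hag⟩ := (hL ↑σ).mp σ.2
      have hmem : (⟨g, hgG⟩ : ↥G) ∈ MulAction.stabilizer ↥G v := hgv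
      refine ⟨⟨⟨g, hgG⟩, hmem⟩, ?_⟩
      apply Subtype.ext
      apply Equiv.ext
      intro u
      apply Subtype.ext
      have h1 := hF ⟨⟨g, hgG⟩, hmem⟩ u
      rw [h1]
      exact (hag u).symm
    calc Nat.card ↥L ≤ Nat.card ↥(MulAction.stabilizer ↥G v) :=
          Nat.card_le_card_of_surjective F hFsurj
    _ = s := hstabv
  have hdL : d ≤ Nat.card ↥L := by
    haveI : MulAction.IsPretransitive ↥L ↥(Γ.neighborSet v) := by
      constructor
      intro a b
      obtain ⟨σ, hσ, hab⟩ := hLtrans a b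
      exact ⟨⟨σ, hσ⟩, hab⟩
    obtain ⟨a₀⟩ := hNSne
    have h1 : (MulAction.stabilizer ↥L a₀).index = Nat.card ↥(Γ.neighborSet v) :=
      MulAction.index_stabilizer_of_transitive ↥L a₀
    have h2 := Subgroup.index_mul_card (MulAction.stabilizer ↥L a₀)
    rw [h1, hdNS] at h2
    have : d ∣ Nat.card ↥L := Dvd.intro _ h2
    exact Nat.le_of_dvd Nat.card_pos this
  have hds : d ≤ s := le_trans hdL hLle
  have hdp : d < p := lt_of_le_of_lt hds hsp
  have hd3 : 3 ≤ d := by omega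
  -- Sylow subgroup
  obtain ⟨PS⟩ : Nonempty (Sylow p ↥G) := Sylow.nonempty
  have hfact : (Nat.card ↥G).factorization p = n := by
    have hk0 : k ≠ 0 := hk.ne'
    have hs0 : s ≠ 0 := by omega
    have hpn0 : p ^ n ≠ 0 := (pow_pos hp.pos n).ne'
    rw [hGcard, Nat.factorization_mul (Nat.mul_ne_zero hk0 hpn0) hs0,
      Nat.factorization_mul hk0 hpn0]
    simp only [Finsupp.coe_add, Pi.add_apply]
    rw [Nat.factorization_eq_zero_of_not_dvd hpk, Nat.factorization_eq_zero_of_not_dvd hps,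
      Nat.Prime.factorization_pow hp]
    simp
  have hPcard : Nat.card ↥(PS : Subgroup ↥G) = p ^ n := by
    rw [Sylow.card_eq_multiplicity, hfact]
  have hPindex : (PS : Subgroup ↥G).index = k * s := by
    have h2 := Subgroup.index_mul_card (PS : Subgroup ↥G)
    rw [hPcard, hGcard] at h2
    have h3 : (PS : Subgroup ↥G).index * p ^ n = (k * s) * p ^ n := by rw [h2]; ring
    exact Nat.eq_of_mul_eq_mul_right (pow_pos hp.pos n) h3
  have hSyl1 : Nat.card (Sylow p ↥G) = 1 := by
    have hdvd := Sylow.card_dvd_index PS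
    rw [hPindex] at hdvd
    have hmod : Nat.card (Sylow p ↥G) % p = 1 % p := card_sylow_modEq_one p ↥G
    have hle : Nat.card (Sylow p ↥G) ≤ k * s :=
      Nat.le_of_dvd (by positivity) hdvd
    have hlt : Nat.card (Sylow p ↥G) < p := lt_of_le_of_lt hle hcon
    have h1p : (1 : ℕ) % p = 1 := Nat.mod_eq_of_lt hp.one_lt
    have hcp : Nat.card (Sylow p ↥G) % p = Nat.card (Sylow p ↥G) := Nat.mod_eq_of_lt hlt
    omega
  have hPnormal : (PS : Subgroup ↥G).Normal := by
    rw [← Subgroup.normalizer_eq_top_iff]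
    apply Subgroup.index_eq_one.mp
    refine (Sylow.card_eq_index_normalizer PS).symm.trans ?_
    exact hSyl1
  -- semiregularity
  have hsemi : ∀ (x : V) (π : ↥(PS : Subgroup ↥G)), (↑π : ↥G) • x = x → π = 1 := by
    intro x π hπx
    by_contra hne
    obtain ⟨jj, hjj⟩ := PS.isPGroup' π
    have hord : orderOf π ∣ p ^ jj := orderOf_dvd_of_pow_eq_one hjj
    obtain ⟨i, hile, hi⟩ := (Nat.dvd_prime_pow hp).mp hord
    have hipos : 0 < i := by
      rcases Nat.eq_zero_or_pos i with h0 | hpos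
      · rw [h0, pow_zero] at hi
        exact absurd (orderOf_eq_one_iff.mp hi) hne
      · exact hpos
    have hpord : p ∣ orderOf π := by
      rw [hi]
      exact dvd_pow_self p hipos.ne'
    have hmem : (↑π : ↥G) ∈ MulAction.stabilizer ↥G x := hπx
    have h2 : orderOf (⟨(↑π : ↥G), hmem⟩ : ↥(MulAction.stabilizer ↥G x)) ∣ s := by
      rw [← hstabx x]
      exact orderOf_dvd_natCard _
    rw [Subgroup.orderOf_mk] at h2
    have h3 : orderOf (↑π : ↥G) = orderOf π := Subgroup.orderOf_coe π
    rw [h3] at h2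
    exact hps (dvd_trans hpord h2)
  -- the elementary abelian quotient and the voltage function
  obtain ⟨A, instA, instAF, m, al, hm, hmsurj, hal_m, hal_P, hal_comp, htor, hA2, hAdvd⟩ :=
    Stmt16Aux.elemquot (PS : Subgroup ↥G) hPnormal hPcard hn
  letI : AddCommGroup A := instA
  haveI : Finite A := instAF
  letI : Module (ZMod p) A := AddCommGroup.zmodModule htor
  have hMne : (((PS : Subgroup ↥G).index : ℕ) : ZMod p) ≠ 0 := by
    rw [Ne, ZMod.natCast_eq_zero_iff]
    intro hdvd
    have h1 : p ≤ (PS : Subgroup ↥G).index :=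
      Nat.le_of_dvd (by rw [hPindex]; positivity) hdvd
    rw [hPindex] at h1
    omega
  have hMM' : ∀ a : A,
      (((((PS : Subgroup ↥G).index : ℕ) : ZMod p))⁻¹.val * (PS : Subgroup ↥G).index) • a = a := by
    intro a
    have h1 : (((((PS : Subgroup ↥G).index : ℕ) : ZMod p))⁻¹.val
        * (PS : Subgroup ↥G).index : ℕ) % p = 1 % p := by
      apply (ZMod.natCast_eq_natCast_iff' _ _ _).mp
      push_cast
      rw [ZMod.natCast_rightInverse _]
      rw [inv_mul_cancel₀ hMne]
    rw [Stmt16Aux.nsmul_congr_mod htor h1, one_smul]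
  obtain ⟨ψ, C, hψP, hψg⟩ := Stmt16Aux.genpsi (PS : Subgroup ↥G) hPnormal m hm al
    hal_m hal_P hal_comp hsemi _ hMM'
  -- the linear map tau
  set tau : (↥(Γ.neighborSet v) → ZMod p) → A :=
    fun f => ∑ u : ↥(Γ.neighborSet v), f u • ψ (↑u) with htaudef
  have htau_sub : ∀ f g : ↥(Γ.neighborSet v) → ZMod p,
      tau (fun x => f x - g x) = tau f - tau g := by
    intro f g
    show ∑ x : ↥(Γ.neighborSet v), (f x - g x) • ψ ↑x = _
    rw [← Finset.sum_sub_distrib]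
    apply Finset.sum_congr rfl
    intro x _
    rw [sub_smul]
  have htau_smul : ∀ (c : ZMod p) (f : ↥(Γ.neighborSet v) → ZMod p),
      tau (fun x => c * f x) = c • tau f := by
    intro c f
    show ∑ x : ↥(Γ.neighborSet v), (c * f x) • ψ ↑x = c • ∑ x : ↥(Γ.neighborSet v), f x • ψ ↑x
    rw [Finset.smul_sum]
    apply Finset.sum_congr rfl
    intro x _
    rw [mul_smul]
  have hTAUACT : ∀ σ : Equiv.Perm ↥(Γ.neighborSet v), σ ∈ L →
      ∀ f : ↥(Γ.neighborSet v) → ZMod p, (∑ u : ↥(Γ.neighborSet v), f u) = 0 →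
      ∃ gg : ↥G, gg • v = v ∧ tau (fun x => f (σ⁻¹ x)) = al gg (tau f) := by
    intro σ hσ f hf
    obtain ⟨g, hgG, hgv, hag⟩ := (hL σ).mp hσ
    refine ⟨⟨g, hgG⟩, hgv, ?_⟩
    have h1 : ∀ u : ↥(Γ.neighborSet v), ψ ((σ u : ↥(Γ.neighborSet v)) : V)
        = al ⟨g, hgG⟩ (ψ ↑u) + C ⟨g, hgG⟩ := by
      intro u
      rw [hag u]
      exact hψg ⟨g, hgG⟩ ↑u
    calc tau (fun x => f (σ⁻¹ x))
        = ∑ x : ↥(Γ.neighborSet v), f (σ⁻¹ x) • ψ ↑x := rfl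
    _ = ∑ u : ↥(Γ.neighborSet v), f (σ⁻¹ (σ u)) • ψ ↑(σ u) :=
        (Equiv.sum_comp σ (fun x => f (σ⁻¹ x) • ψ ↑x)).symm
    _ = ∑ u : ↥(Γ.neighborSet v), f u • (al ⟨g, hgG⟩ (ψ ↑u) + C ⟨g, hgG⟩) := by
        apply Finset.sum_congr rfl
        intro u _
        rw [show σ⁻¹ (σ u) = u from Equiv.symm_apply_apply σ u, h1]
    _ = (∑ u : ↥(Γ.neighborSet v), f u • al ⟨g, hgG⟩ (ψ ↑u))
        + ∑ u : ↥(Γ.neighborSet v), f u • C ⟨g, hgG⟩ := by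
        rw [← Finset.sum_add_distrib]
        apply Finset.sum_congr rfl
        intro u _
        rw [smul_add]
    _ = al ⟨g, hgG⟩ (tau f) := by
        rw [← Finset.sum_smul, hf, zero_smul, add_zero, htaudef]
        rw [map_sum]
        exact Finset.sum_congr rfl (fun u _ => (ZMod.map_smul (al ⟨g, hgG⟩) (f u) (ψ ↑u)).symm)
  -- the main dichotomy
  by_cases hdeg : ∀ u₁ u₂ : ↥(Γ.neighborSet v), ψ ↑u₁ = ψ ↑u₂
  · -- DEGENERATE BRANCH
    obtain ⟨u₀⟩ := hNSne
    set cc := ψ ↑u₀ - ψ v with hcc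
    have hsmulNS : ∀ (gg : ↥G), gg • v = v → ∀ u : ↥(Γ.neighborSet v),
        gg • (↑u : V) ∈ Γ.neighborSet v := by
      intro gg hggv u
      have hadj : Γ.Adj v ↑u := u.2
      have h2 := (hAut ↑gg gg.2 v ↑u).mpr hadj
      have h3 : (↑gg : Equiv.Perm V) v = v := hggv
      rwa [h3] at h2
    have hCinv : ∀ gg : ↥G, gg • v = v → al gg cc = cc := by
      intro gg hggv
      rw [hcc, map_sub]
      have h1 : al gg (ψ ↑u₀) = ψ (gg • (↑u₀ : V)) - C gg := by
        rw [hψg gg]; abel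
      have h2 : al gg (ψ v) = ψ (gg • v) - C gg := by
        rw [hψg gg]; abel
      rw [h1, h2, hggv]
      have h4 := hdeg ⟨gg • ↑u₀, hsmulNS gg hggv u₀⟩ u₀
      have h5 : ψ (gg • (↑u₀ : V)) = ψ ↑u₀ := h4
      rw [h5]
      abel
    have hTrv : ∀ x : V, ∃ gg : ↥G, gg • v = x := fun x => MulAction.exists_smul_eq ↥G v x
    have hθwd : ∀ (x : V) (gg : ↥G), gg • v = x → al gg cc = al ((hTrv x).choose) cc := by
      intro x gg hgg
      have h1 : (((hTrv x).choose)⁻¹ * gg) • v = v := by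
        rw [mul_smul, hgg, inv_smul_eq_iff]
        exact ((hTrv x).choose_spec).symm
      calc al gg cc = al ((hTrv x).choose * (((hTrv x).choose)⁻¹ * gg)) cc := by
            rw [mul_inv_cancel_left]
      _ = al ((hTrv x).choose) (al (((hTrv x).choose)⁻¹ * gg) cc) := (hal_comp _ _ _).symm
      _ = al ((hTrv x).choose) cc := by rw [hCinv _ h1]
    have hEDGE : ∀ x u : V, Γ.Adj x u → ψ u = ψ x + al ((hTrv x).choose) cc := by
      intro x u hadj
      set gg := (hTrv x).choose with hggdef
      have hggv : gg • v = x := (hTrv x).choose_spec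
      have hgu' : gg • (gg⁻¹ • u) = u := smul_inv_smul gg u
      have hadj' : Γ.Adj v (gg⁻¹ • u) := by
        have h2 : Γ.Adj (gg • v) (gg • (gg⁻¹ • u)) ↔ Γ.Adj v (gg⁻¹ • u) :=
          hAut ↑gg gg.2 v (gg⁻¹ • u)
        apply h2.mp
        rw [hggv, hgu']
        exact hadj
      have e1 : ψ u = al gg (ψ (gg⁻¹ • u)) + C gg := by
        conv_lhs => rw [← hgu']
        exact hψg gg (gg⁻¹ • u)
      have e2 : ψ x = al gg (ψ v) + C gg := by
        conv_lhs => rw [← hggv]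
        exact hψg gg v
      have e3 : ψ (gg⁻¹ • u) = ψ v + cc := by
        have h4 : ψ (gg⁻¹ • u) = ψ ↑u₀ := hdeg ⟨gg⁻¹ • u, hadj'⟩ u₀
        rw [h4, hcc]
        abel
      rw [e1, e2, e3, map_add]
      abel
    have hFLIP : ∀ x u : V, Γ.Adj x u →
        al ((hTrv u).choose) cc = - al ((hTrv x).choose) cc := by
      intro x u hadj
      have e1 := hEDGE x u hadj
      have e2 := hEDGE u x hadj.symm
      have h3 : ψ x = (ψ x + al ((hTrv x).choose) cc) + al ((hTrv u).choose) cc := by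
        rw [← e1]; exact e2
      have h4 : al ((hTrv x).choose) cc + al ((hTrv u).choose) cc = 0 := by
        have h5 := h3
        have h6 : ψ x + (al ((hTrv x).choose) cc + al ((hTrv u).choose) cc) = ψ x + 0 := by
          rw [add_zero, ← add_assoc]; exact h5.symm
        exact add_left_cancel h6
      exact eq_neg_of_add_eq_zero_right h4
    have hbase : al ((hTrv v).choose) cc = cc := by
      have h1 : al (1 : ↥G) cc = al ((hTrv v).choose) cc := hθwd v 1 (one_smul _ _)
      rw [← h1]
      have h2 : ((1 : ↥(PS : Subgroup ↥G)) : ↥G) = (1 : ↥G) := rfl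
      rw [← h2]
      exact hal_P 1 cc
    have hWALK : ∀ x : V, (ψ x = ψ v ∧ al ((hTrv x).choose) cc = cc)
        ∨ (ψ x = ψ v + cc ∧ al ((hTrv x).choose) cc = -cc) := by
      have hstep : ∀ (y z : V), Γ.Adj y z →
          ((ψ y = ψ v ∧ al ((hTrv y).choose) cc = cc)
            ∨ (ψ y = ψ v + cc ∧ al ((hTrv y).choose) cc = -cc)) →
          ((ψ z = ψ v ∧ al ((hTrv z).choose) cc = cc)
            ∨ (ψ z = ψ v + cc ∧ al ((hTrv z).choose) cc = -cc)) := by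
        intro y z hadj hy
        have e1 := hEDGE y z hadj
        have e2 := hFLIP y z hadj
        rcases hy with ⟨h1, h2⟩ | ⟨h1, h2⟩
        · right
          constructor
          · rw [e1, h1, h2]
          · rw [e2, h2]
        · left
          constructor
          · rw [e1, h1, h2]; abel
          · rw [e2, h2, neg_neg]
      intro x
      obtain ⟨w⟩ := hconn.preconnected v x
      have hgen : ∀ (y z : V) (w : Γ.Walk y z),
          ((ψ y = ψ v ∧ al ((hTrv y).choose) cc = cc)
            ∨ (ψ y = ψ v + cc ∧ al ((hTrv y).choose) cc = -cc)) →
          ((ψ z = ψ v ∧ al ((hTrv z).choose) cc = cc)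
            ∨ (ψ z = ψ v + cc ∧ al ((hTrv z).choose) cc = -cc)) := by
        intro y z w
        induction w with
        | nil => exact id
        | @cons a b c hadj w' ih => exact fun hy => ih (hstep a b hadj hy)
      exact hgen v x w (Or.inl ⟨rfl, hbase⟩)
    have hm2 : ∀ a : A, a = 0 ∨ a = cc := by
      intro a
      obtain ⟨π, rfl⟩ := hmsurj a
      have h1 := hψP π v
      rcases hWALK ((↑π : ↥G) • v) with ⟨h2, _⟩ | ⟨h2, _⟩
      · left
        have h3 : m π + ψ v = ψ v := h1.symm.trans h2
        have h4 : m π + ψ v = 0 + ψ v := by rw [zero_add]; exact h3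
        exact add_right_cancel h4
      · right
        have h3 : m π + ψ v = ψ v + cc := h1.symm.trans h2
        have h4 : m π + ψ v = cc + ψ v := by rw [h3]; abel
        exact add_right_cancel h4
    have hcardA2 : Nat.card A ≤ 2 := by
      have hinj : Function.Injective (fun a : A => if a = cc then true else false) := by
        intro a b hab
        rcases hm2 a with ha | ha <;> rcases hm2 b with hb | hb
        · rw [ha, hb]
        · by_cases h0c : (0 : A) = cc
          · rw [ha, hb, h0c]
          · simp [ha, hb, h0c] at hab
        · by_cases h0c : (0 : A) = cc
          · rw [ha, hb, h0c]
          · simp [ha, hb, h0c] at hab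
        · rw [ha, hb]
      have h5 := Nat.card_le_card_of_injective _ hinj
      simpa using h5
    have hpA : p ≤ Nat.card A := by
      obtain ⟨i, hile, hi⟩ := (Nat.dvd_prime_pow hp).mp hAdvd
      have hi0 : i ≠ 0 := by
        intro h0
        rw [h0, pow_zero] at hi
        omega
      calc p = p ^ 1 := (pow_one p).symm
      _ ≤ p ^ i := Nat.pow_le_pow_right hp.pos (by omega)
      _ = Nat.card A := hi.symm
    omega
  · -- NON-DEGENERATE BRANCH
    have hKER : ∀ f : ↥(Γ.neighborSet v) → ZMod p,
        (∑ u : ↥(Γ.neighborSet v), f u) = 0 → tau f = 0 → f = 0 := by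
      intro f hSig hτ
      by_contra hf0
      obtain ⟨a, ha⟩ : ∃ a, f a ≠ 0 := by
        by_contra hcon2
        push_neg at hcon2
        exact hf0 (funext hcon2)
      apply hdeg
      suffices hsuff : ∀ b : ↥(Γ.neighborSet v), ψ ↑b = ψ ↑a by
        intro u₁ u₂
        rw [hsuff u₁, hsuff u₂]
      -- the averaging argument
      letI : Fintype ↥L := Fintype.ofFinite _
      letI : Fintype ↥(MulAction.stabilizer ↥L a) := Fintype.ofFinite _
      set F : ↥(Γ.neighborSet v) → ZMod p := fun x =>
        ∑ σ : ↥(MulAction.stabilizer ↥L a),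
          f ((((σ : ↥L) : Equiv.Perm ↥(Γ.neighborSet v)))⁻¹ x) with hFdef
      have hstab_apply : ∀ (σ : ↥(MulAction.stabilizer ↥L a)),
          (((σ : ↥L) : Equiv.Perm ↥(Γ.neighborSet v))) a = a := fun σ => σ.2
      have hstab_inv : ∀ (σ : ↥(MulAction.stabilizer ↥L a)),
          (((σ : ↥L) : Equiv.Perm ↥(Γ.neighborSet v)))⁻¹ a = a := by
        intro σ
        rw [Equiv.Perm.inv_eq_iff_eq]
        exact (hstab_apply σ).symm
      have hFa : F a = (Fintype.card ↥(MulAction.stabilizer ↥L a) : ZMod p) * f a := by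
        rw [hFdef]
        simp only []
        rw [Finset.sum_congr rfl (fun σ _ => by rw [hstab_inv σ])]
        rw [Finset.sum_const, Finset.card_univ, nsmul_eq_mul]
      have hcardSta : (Fintype.card ↥(MulAction.stabilizer ↥L a) : ZMod p) ≠ 0 := by
        rw [Ne, ZMod.natCast_eq_zero_iff]
        intro hdvd
        have h1 : Nat.card ↥(MulAction.stabilizer ↥L a) ∣ Nat.card ↥L :=
          Subgroup.card_subgroup_dvd_card _
        have h2 : 0 < Nat.card ↥(MulAction.stabilizer ↥L a) := Nat.card_pos
        have h3 : Nat.card ↥(MulAction.stabilizer ↥L a) ≤ Nat.card ↥L :=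
          Nat.le_of_dvd Nat.card_pos h1
        rw [Nat.card_eq_fintype_card] at h2 h3
        have h4 := Nat.le_of_dvd (by omega) hdvd
        omega
      have hlamne : F a ≠ 0 := by
        rw [hFa]
        exact mul_ne_zero hcardSta ha
      have hFoff : ∀ x y : ↥(Γ.neighborSet v), x ≠ a → y ≠ a → F x = F y := by
        intro x y hx hy
        obtain ⟨σ₀, hσ₀L, hσ₀a, hσ₀x⟩ := hL2 a x y hx hy
        have hσ₀Sta : (⟨σ₀, hσ₀L⟩ : ↥L) ∈ MulAction.stabilizer ↥L a := hσ₀a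
        have h := Equiv.sum_comp
          (Equiv.mulLeft (⟨⟨σ₀, hσ₀L⟩, hσ₀Sta⟩ : ↥(MulAction.stabilizer ↥L a)))
          (fun σ : ↥(MulAction.stabilizer ↥L a) =>
            f ((((σ : ↥L) : Equiv.Perm ↥(Γ.neighborSet v)))⁻¹ y))
        rw [hFdef]
        simp only []
        rw [← h]
        apply Finset.sum_congr rfl
        intro σ _
        congr 1
        have hinvy : σ₀⁻¹ y = x := by
          rw [Equiv.Perm.inv_eq_iff_eq]
          exact hσ₀x.symm
        have hcoe : ((((Equiv.mulLeft (⟨⟨σ₀, hσ₀L⟩, hσ₀Sta⟩ :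
              ↥(MulAction.stabilizer ↥L a)) σ) : ↥L)) : Equiv.Perm ↥(Γ.neighborSet v))
            = σ₀ * (((σ : ↥L) : Equiv.Perm ↥(Γ.neighborSet v))) := rfl
        rw [hcoe, mul_inv_rev, Equiv.Perm.mul_apply, hinvy]
      have hFsum0 : ∑ x : ↥(Γ.neighborSet v), F x = 0 := by
        calc ∑ x : ↥(Γ.neighborSet v), F x
            = ∑ σ : ↥(MulAction.stabilizer ↥L a), ∑ x : ↥(Γ.neighborSet v),
              f ((((σ : ↥L) : Equiv.Perm ↥(Γ.neighborSet v)))⁻¹ x) := Finset.sum_comm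
        _ = ∑ _σ : ↥(MulAction.stabilizer ↥L a), (0 : ZMod p) :=
            Finset.sum_congr rfl (fun σ _ =>
              (Equiv.sum_comp ((((σ : ↥L) : Equiv.Perm ↥(Γ.neighborSet v)))⁻¹) f).trans hSig)
        _ = 0 := Finset.sum_const_zero
      have hτF : tau F = 0 := by
        have h1 : tau F = ∑ σ : ↥(MulAction.stabilizer ↥L a),
            tau (fun x => f ((((σ : ↥L) : Equiv.Perm ↥(Γ.neighborSet v)))⁻¹ x)) := by
          have h0 : tau F = ∑ x : ↥(Γ.neighborSet v), F x • ψ ↑x := rfl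
          rw [h0]
          rw [Finset.sum_congr rfl (fun x _ => show F x • ψ ↑x
            = ∑ σ : ↥(MulAction.stabilizer ↥L a),
              f ((((σ : ↥L) : Equiv.Perm ↥(Γ.neighborSet v)))⁻¹ x) • ψ ↑x from by
            rw [hFdef]
            exact Finset.sum_smul)]
          exact Finset.sum_comm
        rw [h1]
        have h2 : ∀ σ : ↥(MulAction.stabilizer ↥L a),
            tau (fun x => f ((((σ : ↥L) : Equiv.Perm ↥(Γ.neighborSet v)))⁻¹ x)) = 0 := by
          intro σ
          obtain ⟨gg, hggv, heq⟩ := hTAUACT (((σ : ↥L) : Equiv.Perm ↥(Γ.neighborSet v)))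
            ((σ : ↥L)).2 f hSig
          rw [heq, hτ, map_zero]
        rw [Finset.sum_congr rfl (fun σ _ => h2 σ), Finset.sum_const, smul_zero]
      -- the values of F
      obtain ⟨x₀, hx₀⟩ : ∃ x₀ : ↥(Γ.neighborSet v), x₀ ≠ a :=
        Fintype.exists_ne_of_one_lt_card (by omega) a
      have hFval : ∀ x : ↥(Γ.neighborSet v), F x = if x = a then F a else F x₀ := by
        intro x
        by_cases hxa : x = a
        · rw [if_pos hxa, hxa]
        · rw [if_neg hxa]
          exact hFoff x x₀ hxa hx₀
      have hSsplit : ∀ (c1 c2 : ZMod p),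
          (∑ x : ↥(Γ.neighborSet v), (if x = a then c1 else c2))
            = c1 + ((d - 1 : ℕ) : ZMod p) * c2 := by
        intro c1 c2
        rw [← Finset.add_sum_erase _ _ (Finset.mem_univ a), if_pos rfl]
        congr 1
        rw [Finset.sum_congr rfl (fun x hx => if_neg (Finset.ne_of_mem_erase hx))]
        rw [Finset.sum_const, Finset.card_erase_of_mem (Finset.mem_univ a),
          Finset.card_univ, hcardNST, nsmul_eq_mul]
      have h00 : F a + ((d - 1 : ℕ) : ZMod p) * F x₀ = 0 := by
        calc F a + ((d - 1 : ℕ) : ZMod p) * F x₀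
            = ∑ x : ↥(Γ.neighborSet v), (if x = a then F a else F x₀) := (hSsplit _ _).symm
        _ = ∑ x : ↥(Γ.neighborSet v), F x :=
            Finset.sum_congr rfl (fun x _ => (hFval x).symm)
        _ = 0 := hFsum0
      have hGb : ∀ b : ↥(Γ.neighborSet v),
          tau (fun x => if x = b then F a else F x₀) = 0 := by
        intro b
        obtain ⟨σb, hσbL, hσba⟩ := hLtrans a b
        obtain ⟨gg, hggv, htheq⟩ := hTAUACT σb hσbL (fun x => if x = a then F a else F x₀)
          (by rw [hSsplit]; exact h00)
        have hτGa : tau (fun x => if x = a then F a else F x₀) = 0 := by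
          have h3 : (fun x => if x = a then F a else F x₀) = F := funext fun x => (hFval x).symm
          rw [h3]
          exact hτF
        have hfun : (fun x => if σb⁻¹ x = a then F a else F x₀)
            = (fun x => if x = b then F a else F x₀) := by
          funext x
          congr 1
          have : (σb⁻¹ x = a) ↔ (x = b) := by
            rw [Equiv.Perm.inv_eq_iff_eq]
            constructor
            · intro h5; rw [h5, hσba]
            · intro h5; rw [h5, ← hσba]
          simp only [eq_iff_iff]
          exact this
        rw [← hfun, htheq, hτGa, map_zero]
      -- conclude the constancy of ψ
      have hμ : F x₀ ≠ 0 := by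
        intro h0'
        rw [h0', mul_zero, add_zero] at h00
        exact hlamne h00
      have hlm : F a - F x₀ ≠ 0 := by
        have hlameq : F a = -(((d - 1 : ℕ) : ZMod p) * F x₀) :=
          eq_neg_of_add_eq_zero_left h00
        rw [hlameq]
        have hd1 : ((d - 1 : ℕ) : ZMod p) + 1 = ((d : ℕ) : ZMod p) := by
          rw [Nat.cast_sub (by omega : 1 ≤ d), Nat.cast_one]
          ring
        have h6 : -(((d - 1 : ℕ) : ZMod p) * F x₀) - F x₀ = -(((d : ℕ) : ZMod p) * F x₀) := by
          rw [← hd1]; ring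
        rw [h6, neg_ne_zero]
        apply mul_ne_zero
        · rw [Ne, ZMod.natCast_eq_zero_iff]
          intro hdvd
          have := Nat.le_of_dvd (by omega) hdvd
          omega
        · exact hμ
      intro b
      by_cases hba : b = a
      · rw [hba]
      have htauind : ∀ c : ↥(Γ.neighborSet v),
          tau (fun x => if x = c then (1 : ZMod p) else 0) = ψ ↑c := by
        intro c
        have h7 : tau (fun x => if x = c then (1 : ZMod p) else 0)
            = ∑ x : ↥(Γ.neighborSet v), (if x = c then (1 : ZMod p) else 0) • ψ ↑x := rfl
        rw [h7]
        rw [Finset.sum_congr rfl (fun x _ => show (if x = c then (1 : ZMod p) else 0) • ψ ↑x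
          = (if x = c then ψ ↑x else 0) from by split_ifs <;> simp)]
        rw [Finset.sum_ite_eq' Finset.univ c (fun x => ψ ↑x)]
        simp
      have hdiff : tau (fun x => (if x = a then F a else F x₀) - (if x = b then F a else F x₀))
          = 0 := by
        rw [htau_sub]
        have h8 : (fun x => if x = a then F a else F x₀) = F := funext fun x => (hFval x).symm
        rw [h8, hτF, hGb b, sub_zero]
      have hfact : (fun x : ↥(Γ.neighborSet v) =>
            (if x = a then F a else F x₀) - (if x = b then F a else F x₀))
          = fun x => (F a - F x₀) * ((if x = a then (1 : ZMod p) else 0)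
            - (if x = b then 1 else 0)) := by
        funext x
        split_ifs <;> ring
      have h5 : (F a - F x₀) • (ψ ↑a - ψ ↑b) = 0 := by
        have h6 : tau (fun x => (F a - F x₀) * ((if x = a then (1 : ZMod p) else 0)
            - (if x = b then 1 else 0))) = (F a - F x₀) • (ψ ↑a - ψ ↑b) := by
          rw [htau_smul, htau_sub, htauind, htauind]
        rw [← h6, ← hfact, hdiff]
      have h7 : ψ ↑a - ψ ↑b = 0 := by
        have h8 := congrArg (fun z => (F a - F x₀)⁻¹ • z) h5
        simpa [smul_smul, inv_mul_cancel₀ hlm] using h8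
      have h9 := sub_eq_zero.mp h7
      exact h9.symm
    -- the injection and the cardinality contradiction
    obtain ⟨x₀⟩ := hNSne
    set ext : ({x : ↥(Γ.neighborSet v) // x ≠ x₀} → ZMod p) → (↥(Γ.neighborSet v) → ZMod p) :=
      fun f' x => if h : x = x₀ then -∑ y : {x : ↥(Γ.neighborSet v) // x ≠ x₀}, f' y
        else f' ⟨x, h⟩ with hextdef
    have hextsum : ∀ f', ∑ x : ↥(Γ.neighborSet v), ext f' x = 0 := by
      intro f'
      rw [← Finset.add_sum_erase _ _ (Finset.mem_univ x₀)]
      have h1 : ext f' x₀ = -∑ y : {x : ↥(Γ.neighborSet v) // x ≠ x₀}, f' y := by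
        rw [hextdef]; exact dif_pos rfl
      have h2 : ∑ x ∈ Finset.univ.erase x₀, ext f' x
          = ∑ y : {x : ↥(Γ.neighborSet v) // x ≠ x₀}, f' y := by
        rw [Finset.sum_subtype (p := fun x => x ≠ x₀) (Finset.univ.erase x₀)
          (fun x => by simp [Finset.mem_erase]) (fun x => ext f' x)]
        apply Finset.sum_congr rfl
        intro y _
        rw [hextdef]
        simp only []
        rw [dif_neg y.2]
      rw [h1, h2, neg_add_cancel]
    have hextsub : ∀ f₁ f₂, (fun x => ext f₁ x - ext f₂ x) = ext (fun y => f₁ y - f₂ y) := by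
      intro f₁ f₂
      funext x
      rw [hextdef]
      simp only []
      by_cases hx : x = x₀
      · rw [dif_pos hx, dif_pos hx, dif_pos hx, Finset.sum_sub_distrib]
        abel
      · rw [dif_neg hx, dif_neg hx, dif_neg hx]
    have hJinj : Function.Injective (fun f' => tau (ext f')) := by
      intro f₁ f₂ h12
      have h1 : tau (fun x => ext f₁ x - ext f₂ x) = 0 := by
        rw [htau_sub]
        simp only [] at h12
        rw [h12, sub_self]
      rw [hextsub] at h1
      have h2 : ext (fun y => f₁ y - f₂ y) = 0 := hKER _ (hextsum _) h1
      funext y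
      have h3 := congrFun h2 ↑y
      rw [hextdef] at h3
      simp only [] at h3
      rw [dif_neg y.2] at h3
      have h4 : f₁ ⟨↑y, y.2⟩ - f₂ ⟨↑y, y.2⟩ = 0 := h3
      have h5 : (⟨↑y, y.2⟩ : {x : ↥(Γ.neighborSet v) // x ≠ x₀}) = y := Subtype.ext rfl
      rw [h5] at h4
      exact sub_eq_zero.mp h4
    have hcard1 : Nat.card ({x : ↥(Γ.neighborSet v) // x ≠ x₀} → ZMod p) ≤ Nat.card A :=
      Nat.card_le_card_of_injective _ hJinj
    have hS'card : Fintype.card {x : ↥(Γ.neighborSet v) // x ≠ x₀} = d - 1 := by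
      have h1 : Fintype.card {x : ↥(Γ.neighborSet v) // x = x₀} = 1 :=
        Fintype.card_subtype_eq x₀
      have h2 := Fintype.card_subtype_compl (fun x : ↥(Γ.neighborSet v) => x = x₀)
      rw [h1, hcardNST] at h2
      exact h2
    have hfuncard : Nat.card ({x : ↥(Γ.neighborSet v) // x ≠ x₀} → ZMod p) = p ^ (d - 1) := by
      rw [Nat.card_eq_fintype_card, Fintype.card_fun, hS'card, ZMod.card]
    have hApow : Nat.card A ≤ p ^ n := Nat.le_of_dvd (pow_pos hp.pos n) hAdvd
    have hple : p ^ (d - 1) ≤ p ^ n := by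
      rw [← hfuncard]
      exact le_trans hcard1 hApow
    have hd1n : d - 1 ≤ n := (Nat.pow_le_pow_iff_right hp.one_lt).mp hple
    omega
end
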